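/- arXiv:1912.02342 — 5 statements merged into one kernel-verified Lean document; each statement's English description precedes it below -/
import Mathlib

section
/- The multicolor triangle Ramsey numbers are supermultiplicative: for all m1, m2 ≥ 1, r(3; m1 + m2) ≥ (r(3;m1) − 1)·(r(3;m2) − 1) + 1. -/
/-- The coloring `χ` of the edges of `K_n` contains a monochromatic triangle. -/
def HasMonoTriangle {n m : ℕ} (χ : Fin n → Fin n → Fin m) : Prop :=
  ∃ u v w : Fin n, u ≠ v ∧ u ≠ w ∧ v ≠ w ∧ χ u v = χ u w ∧ χ u v = χ v w

/-- The multicolor triangle Ramsey number `r(3;m)`: the smallest `n` such that every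
symmetric `m`-coloring of the edges of `K_n` contains a monochromatic triangle. -/
noncomputable def ramseyThree (m : ℕ) : ℕ :=
  sInf {n : ℕ | ∀ χ : Fin n → Fin n → Fin m, (∀ u v, χ u v = χ v u) → HasMonoTriangle χ}

/-- The set whose infimum is `ramseyThree m`. -/
def RamseySet (m : ℕ) : Set ℕ :=
  {n : ℕ | ∀ χ : Fin n → Fin n → Fin m, (∀ u v, χ u v = χ v u) → HasMonoTriangle χ}

lemma ramseyThree_eq (m : ℕ) : ramseyThree m = sInf (RamseySet m) := rfl

lemma ramseySet_upward {m n n' : ℕ} (h : n ∈ RamseySet m) (hle : n ≤ n') :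
    n' ∈ RamseySet m := by
  intro χ hsym
  obtain ⟨u, v, w, huv, huw, hvw, h1, h2⟩ :=
    h (fun i j => χ (Fin.castLE hle i) (Fin.castLE hle j)) (fun u v => hsym _ _)
  exact ⟨Fin.castLE hle u, Fin.castLE hle v, Fin.castLE hle w,
    fun he => huv (Fin.castLE_injective hle he),
    fun he => huw (Fin.castLE_injective hle he),
    fun he => hvw (Fin.castLE_injective hle he), h1, h2⟩

lemma zero_not_mem_ramseySet (m : ℕ) : 0 ∉ RamseySet m := by
  intro h
  obtain ⟨u, -⟩ := h (fun i _ => i.elim0) (fun u _ => u.elim0)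
  exact u.elim0

/-- A color-removal map: sends `Fin (m+1)` to `Fin m`, injectively away from `c`. -/
def removeColor {m : ℕ} (hm : 1 ≤ m) (c : Fin (m + 1)) (x : Fin (m + 1)) : Fin m :=
  if h : x.val < c.val then ⟨x.val, by omega⟩ else ⟨x.val - 1, by have := x.isLt; omega⟩

lemma removeColor_inj {m : ℕ} (hm : 1 ≤ m) (c : Fin (m + 1)) {x y : Fin (m + 1)}
    (hx : x ≠ c) (hy : y ≠ c) (h : removeColor hm c x = removeColor hm c y) : x = y := by
  have hx' : x.val ≠ c.val := fun he => hx (Fin.ext he)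
  have hy' : y.val ≠ c.val := fun he => hy (Fin.ext he)
  unfold removeColor at h
  apply Fin.ext
  split_ifs at h <;> simp only [Fin.mk.injEq] at h <;> omega

lemma ramseySet_nonempty {m : ℕ} (hm : 1 ≤ m) : (RamseySet m).Nonempty := by
  induction m, hm using Nat.le_induction with
  | base =>
    refine ⟨3, fun χ hsym => ⟨0, 1, 2, by decide, by decide, by decide, ?_, ?_⟩⟩ <;>
      exact Subsingleton.elim _ _
  | succ m hm ih =>
    obtain ⟨N, hN⟩ := ih
    refine ⟨(m + 1) * N + 2, fun χ hsym => ?_⟩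
    haveI : NeZero ((m + 1) * N + 2) := ⟨by omega⟩
    -- pigeonhole on the colors of edges from vertex 0
    set s : Finset (Fin ((m + 1) * N + 2)) := Finset.univ.erase 0 with hs
    have hscard : s.card = (m + 1) * N + 1 := by
      rw [hs, Finset.card_erase_of_mem (Finset.mem_univ _), Finset.card_univ, Fintype.card_fin]
      omega
    obtain ⟨c, -, hc⟩ :=
      Finset.exists_lt_card_fiber_of_mul_lt_card_of_maps_to
        (f := fun a => χ 0 a) (t := (Finset.univ : Finset (Fin (m + 1)))) (n := N)
        (fun a _ => Finset.mem_univ _)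
        (by rw [hscard, Finset.card_univ, Fintype.card_fin]; omega)
    set T : Finset (Fin ((m + 1) * N + 2)) := s.filter (fun a => χ 0 a = c) with hT
    obtain ⟨T', hT'sub, hT'card⟩ := Finset.exists_subset_card_eq (le_of_lt hc)
    set e := T'.orderEmbOfFin hT'card with he
    have heT : ∀ i, e i ∈ T := fun i => hT'sub (T'.orderEmbOfFin_mem hT'card i)
    have hene : ∀ i, e i ≠ 0 := fun i => by
      have := heT i
      rw [hT, Finset.mem_filter, hs, Finset.mem_erase] at this
      exact this.1.1
    have hec : ∀ i, χ 0 (e i) = c := fun i => by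
      have := heT i
      rw [hT, Finset.mem_filter] at this
      exact this.2
    by_cases hcase : ∃ i j : Fin N, i ≠ j ∧ χ (e i) (e j) = c
    · obtain ⟨i, j, hij, hcij⟩ := hcase
      exact ⟨0, e i, e j, fun h => hene i h.symm, fun h => hene j h.symm,
        fun h => hij (e.injective h), (hec i).trans (hec j).symm,
        (hec i).trans hcij.symm⟩
    · push_neg at hcase
      obtain ⟨i, j, k, hij, hik, hjk, h1, h2⟩ :=
        hN (fun i j => removeColor hm c (χ (e i) (e j)))
          (fun i j => by simp only [hsym (e i) (e j)])
      have nij : χ (e i) (e j) ≠ c := hcase i j hij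
      have nik : χ (e i) (e k) ≠ c := hcase i k hik
      have njk : χ (e j) (e k) ≠ c := hcase j k hjk
      exact ⟨e i, e j, e k, fun h => hij (e.injective h), fun h => hik (e.injective h),
        fun h => hjk (e.injective h),
        removeColor_inj hm c nij nik h1, removeColor_inj hm c nij njk h2⟩

lemma sub_one_not_mem_ramseySet (m : ℕ) : ramseyThree m - 1 ∉ RamseySet m := by
  intro h
  rcases Nat.eq_zero_or_pos (ramseyThree m) with h0 | hpos
  · rw [h0] at h
    exact zero_not_mem_ramseySet m h
  · have hle : ramseyThree m ≤ ramseyThree m - 1 := Nat.sInf_le h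
    omega

lemma castAdd_ne_natAdd {m₁ m₂ : ℕ} (x : Fin m₁) (y : Fin m₂) :
    Fin.castAdd m₂ x ≠ Fin.natAdd m₁ y := by
  intro h
  have := congrArg Fin.val h
  simp only [Fin.coe_castAdd, Fin.coe_natAdd] at this
  have := x.isLt
  omega

lemma natAdd_inj {m₁ m₂ : ℕ} {x y : Fin m₂} (h : Fin.natAdd m₁ x = Fin.natAdd m₁ y) :
    x = y := by
  have := congrArg Fin.val h
  simp only [Fin.coe_natAdd] at this
  exact Fin.ext (by omega)

/-- Supermultiplicativity (Chung): `r(3; m₁+m₂) ≥ (r(3;m₁) − 1)(r(3;m₂) − 1) + 1`. -/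
theorem ramseyThree_supermultiplicative (m₁ m₂ : ℕ) (h₁ : 1 ≤ m₁) (h₂ : 1 ≤ m₂) :
    (ramseyThree m₁ - 1) * (ramseyThree m₂ - 1) + 1 ≤ ramseyThree (m₁ + m₂) := by
  set a := ramseyThree m₁ - 1 with ha
  set b := ramseyThree m₂ - 1 with hb
  -- extract triangle-free colorings on `Fin a` and `Fin b`
  have ha' := sub_one_not_mem_ramseySet m₁
  have hb' := sub_one_not_mem_ramseySet m₂
  rw [RamseySet, Set.mem_setOf_eq] at ha' hb'
  push_neg at ha' hb'
  obtain ⟨χ₁, hs₁, ht₁⟩ := ha'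
  obtain ⟨χ₂, hs₂, ht₂⟩ := hb'
  -- the product coloring on `Fin (a * b)`
  set E := (finProdFinEquiv : Fin a × Fin b ≃ Fin (a * b)) with hE
  set χ : Fin (a * b) → Fin (a * b) → Fin (m₁ + m₂) := fun u v =>
    if (E.symm u).2 = (E.symm v).2
    then Fin.castAdd m₂ (χ₁ (E.symm u).1 (E.symm v).1)
    else Fin.natAdd m₁ (χ₂ (E.symm u).2 (E.symm v).2) with hχ
  have hχsym : ∀ u v, χ u v = χ v u := by
    intro u v
    rw [hχ]
    dsimp only
    by_cases h : (E.symm u).2 = (E.symm v).2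
    · rw [if_pos h, if_pos h.symm, hs₁]
    · rw [if_neg h, if_neg (Ne.symm h), hs₂]
  have hab : a * b ∉ RamseySet (m₁ + m₂) := by
    intro hmem
    obtain ⟨u, v, w, huv, huw, hvw, e1, e2⟩ := hmem χ hχsym
    set p := E.symm u with hp
    set q := E.symm v with hq
    set r := E.symm w with hr
    have hpq : p ≠ q := fun h => huv (by rw [← E.apply_symm_apply u, ← E.apply_symm_apply v,
      ← hp, ← hq, h])
    have hpr : p ≠ r := fun h => huw (by rw [← E.apply_symm_apply u, ← E.apply_symm_apply w,
      ← hp, ← hr, h])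
    have hqr : q ≠ r := fun h => hvw (by rw [← E.apply_symm_apply v, ← E.apply_symm_apply w,
      ← hq, ← hr, h])
    rw [hχ] at e1 e2
    dsimp only at e1 e2
    rw [← hp, ← hq, ← hr] at e1 e2
    by_cases h12 : p.2 = q.2
    · rw [if_pos h12] at e1 e2
      by_cases h13 : p.2 = r.2
      · rw [if_pos h13] at e1
        have h23 : q.2 = r.2 := h12.symm.trans h13
        rw [if_pos h23] at e2
        refine ht₁ ⟨p.1, q.1, r.1, ?_, ?_, ?_,
          Fin.castAdd_injective _ _ e1, Fin.castAdd_injective _ _ e2⟩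
        · exact fun h => hpq (Prod.ext h h12)
        · exact fun h => hpr (Prod.ext h h13)
        · exact fun h => hqr (Prod.ext h h23)
      · rw [if_neg h13] at e1
        exact castAdd_ne_natAdd _ _ e1
    · rw [if_neg h12] at e1 e2
      by_cases h13 : p.2 = r.2
      · rw [if_pos h13] at e1
        exact castAdd_ne_natAdd _ _ e1.symm
      · rw [if_neg h13] at e1
        by_cases h23 : q.2 = r.2
        · rw [if_pos h23] at e2
          exact castAdd_ne_natAdd _ _ e2.symm
        · rw [if_neg h23] at e2
          exact ht₂ ⟨p.2, q.2, r.2, h12, h13, h23, natAdd_inj e1, natAdd_inj e2⟩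
  -- conclude via the infimum
  rw [ramseyThree_eq]
  refine le_csInf (ramseySet_nonempty (by omega)) ?_
  intro n hn
  by_contra hlt
  push_neg at hlt
  exact hab (ramseySet_upward hn (by omega))
end

section
/- If a finite set system F shatters a set S of size 2^{d+1}, then the dual set system F* shatters a set of size d+1. (Contrapositive form of the dual VC-dimension bound.) -/
open Finset

variable {α : Type*}

/-- `S` is shattered by the finite set system `F`. -/
def SysShatters [DecidableEq α] (F : Finset (Finset α)) (S : Finset α) : Prop :=
  ∀ B ⊆ S, ∃ A ∈ F, A ∩ S = B

/-- The set system `F` has VC-dimension at most `d`. -/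
def VCDimLE [DecidableEq α] (F : Finset (Finset α)) (d : ℕ) : Prop :=
  ∀ S : Finset α, SysShatters F S → S.card ≤ d

/-- The dual set system `F* = { {A ∈ F : v ∈ A} : v ∈ V }` of `F`. -/
def dualSystem {V : Type*} [Fintype V] [DecidableEq V] (F : Finset (Finset V)) :
    Finset (Finset (Finset V)) :=
  Finset.univ.image (fun v : V => F.filter (fun A => v ∈ A))

/-- `F` has dual VC-dimension at most `d`. -/
def DualVCDimLE {V : Type*} [Fintype V] [DecidableEq V] (F : Finset (Finset V)) (d : ℕ) : Prop :=
  VCDimLE (dualSystem F) d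

/-- The number of members of `F` crossing the pair `{u,v}`, i.e. containing
exactly one of `u` and `v`. -/
def crossCount [DecidableEq α] (F : Finset (Finset α)) (u v : α) : ℕ :=
  (F.filter (fun A => (u ∈ A ∧ v ∉ A) ∨ (v ∈ A ∧ u ∉ A))).card

/-- If a finite set system `F` shatters a set `S` of size `2^{d+1}`, then the dual
set system `F*` shatters a subset of its ground set `F` of size `d+1`. -/
theorem dual_shatters_of_shatters {V : Type*} [Fintype V] [DecidableEq V]
    (F : Finset (Finset V)) (d : ℕ) (S : Finset V)
    (hcard : S.card = 2 ^ (d + 1)) (hshat : SysShatters F S) :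
    ∃ T : Finset (Finset V), T ⊆ F ∧ T.card = d + 1 ∧ SysShatters (dualSystem F) T := by
  classical
  have hcard' : Fintype.card (Finset (Fin (d + 1))) = Fintype.card {x // x ∈ S} := by
    simp [Fintype.card_finset, hcard]
  obtain ⟨e⟩ := Fintype.card_eq.mp hcard'
  set s : Finset (Fin (d + 1)) → V := fun J => (e J : V) with hs
  have hsinj : Function.Injective s := fun J K h => e.injective (Subtype.ext h)
  have hsS : ∀ J, s J ∈ S := fun J => (e J).2
  have hB : ∀ i : Fin (d + 1), ((univ.filter (fun J => i ∈ J)).image s) ⊆ S := by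
    intro i v hv
    simp only [mem_image, mem_filter, mem_univ, true_and] at hv
    obtain ⟨J, _, rfl⟩ := hv; exact hsS J
  choose A hAF hAS using fun i => hshat _ (hB i)
  have hmem : ∀ i J, s J ∈ A i ↔ i ∈ J := by
    intro i J
    constructor
    · intro h
      have h2 : s J ∈ A i ∩ S := mem_inter.mpr ⟨h, hsS J⟩
      rw [hAS i] at h2
      simp only [mem_image, mem_filter, mem_univ, true_and] at h2
      obtain ⟨K, hK, hKJ⟩ := h2
      rwa [← hsinj hKJ]
    · intro h
      have h2 : s J ∈ A i ∩ S := by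
        rw [hAS i]
        simp only [mem_image, mem_filter, mem_univ, true_and]
        exact ⟨J, h, rfl⟩
      exact (mem_inter.mp h2).1
  have hAinj : Function.Injective A := by
    intro i j h
    have h1 : s {i} ∈ A i := (hmem i {i}).mpr (by simp)
    rw [h] at h1
    have := (hmem j {i}).mp h1
    exact ((mem_singleton.mp this).symm)
  refine ⟨univ.image A, ?_, ?_, ?_⟩
  · intro X hX
    simp only [mem_image, mem_univ, true_and] at hX
    obtain ⟨i, rfl⟩ := hX; exact hAF i
  · rw [card_image_of_injective _ hAinj, card_univ, Fintype.card_fin]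
  · intro C hC
    set J := univ.filter (fun i => A i ∈ C) with hJ
    refine ⟨F.filter (fun X => s J ∈ X), ?_, ?_⟩
    · simp only [dualSystem, mem_image, mem_univ, true_and]
      exact ⟨s J, rfl⟩
    · ext X
      simp only [mem_inter, mem_filter, mem_image, mem_univ, true_and]
      constructor
      · rintro ⟨⟨hXF, hv⟩, i, rfl⟩
        have := (hmem i J).mp hv
        simpa [hJ] using this
      · intro hXC
        have hXT := hC hXC
        simp only [mem_image, mem_univ, true_and] at hXT
        obtain ⟨i, rfl⟩ := hXT
        exact ⟨⟨hAF i, (hmem i J).mpr (by simp [hJ, hXC])⟩, i, rfl⟩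
end

section
/- (Haussler's packing lemma, dual form) For every d ≥ 1 there is a constant c1 = c1(d) such that the following holds: if F is a finite set system on ground set V whose dual VC-dimension is at most d, and X ⊆ V is δ-separated (every pair of distinct points of X is crossed by at least δ members of F), then |X| ≤ c1·(|F|/δ)^d. -/
open Finset

variable {α : Type*}

/-- `X` is `δ`-separated with respect to `F`: every pair of distinct points of `X`
is crossed by at least `δ` members of `F`. -/
def Separated [DecidableEq α] (F : Finset (Finset α)) (δ : ℝ) (X : Finset α) : Prop :=
  ∀ u ∈ X, ∀ v ∈ X, u ≠ v → δ ≤ (crossCount F u v : ℝ)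

section Aux

variable {β : Type*} [DecidableEq β]

lemma vcdimle_iff {P : Finset (Finset β)} {d : ℕ} :
    VCDimLE P d ↔ ∀ S : Finset β, P.Shatters S → S.card ≤ d := by
  constructor
  · intro h S hS
    exact h S (fun B hB => by obtain ⟨u, hu, hu2⟩ := hS hB; exact ⟨u, hu, by rwa [inter_comm]⟩)
  · intro h S hS
    exact h S (fun B hB => by obtain ⟨u, hu, hu2⟩ := hS B hB; exact ⟨u, hu, by rwa [inter_comm]⟩)

lemma vcdimle_mono {P Q : Finset (Finset β)} {d : ℕ} (hPQ : P ⊆ Q) (h : VCDimLE Q d) :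
    VCDimLE P d := by
  rw [vcdimle_iff] at h ⊢
  exact fun S hS => h S (hS.mono_left hPQ)

lemma vcdimle_restrict {P : Finset (Finset β)} {d : ℕ} (h : VCDimLE P d) (A : Finset β) :
    VCDimLE (P.image (· ∩ A)) d := by
  rw [vcdimle_iff] at h ⊢
  intro S hS
  apply h S
  intro t ht
  obtain ⟨u, hu, hu2⟩ := hS ht
  simp only [mem_image] at hu
  obtain ⟨v, hv, rfl⟩ := hu
  refine ⟨v, hv, ?_⟩
  have hSA : S ⊆ A := by
    obtain ⟨u', hu', hSu'⟩ := hS.exists_superset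
    simp only [mem_image] at hu'
    obtain ⟨v', _, rfl⟩ := hu'
    exact hSu'.trans inter_subset_right
  rw [← hu2]
  ext x
  simp only [mem_inter]
  exact ⟨fun h => ⟨h.1, h.2, hSA h.1⟩, fun h => ⟨h.1, h.2.1⟩⟩

/-- Counting subsets of card ≤ d : Sauer bound. -/
lemma card_low_powerset (Ω : Finset β) (d : ℕ) (hd : 1 ≤ d) :
    ((Ω.powerset).filter (fun s => s.card ≤ d)).card ≤ (Ω.card + 1) ^ d := by
  induction d with
  | zero => omega
  | succ d IH =>
    rcases Nat.eq_zero_or_pos d with rfl | hd1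
    · -- card ≤ 1 : empty set or singletons
      have hsub : (Ω.powerset).filter (fun s => s.card ≤ 1) ⊆
          insert ∅ (Ω.image (fun x : β => ({x} : Finset β))) := by
        intro s hs
        simp only [mem_filter, mem_powerset] at hs
        rcases Nat.le_one_iff_eq_zero_or_eq_one.1 hs.2 with h | h
        · simp [Finset.card_eq_zero.1 h]
        · obtain ⟨x, rfl⟩ := Finset.card_eq_one.1 h
          simp only [mem_insert, mem_image]
          exact Or.inr ⟨x, hs.1 (mem_singleton_self x), rfl⟩
      calc ((Ω.powerset).filter (fun s => s.card ≤ 1)).card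
          ≤ (insert ∅ (Ω.image (fun x : β => ({x} : Finset β)))).card := card_le_card hsub
        _ ≤ (Ω.image (fun x : β => ({x} : Finset β))).card + 1 := card_insert_le _ _
        _ ≤ Ω.card + 1 :=
            Nat.add_le_add_right (card_image_le (f := fun x : β => ({x} : Finset β))) 1
        _ ≤ (Ω.card + 1) ^ 1 := by rw [pow_one]
    · have hsplit := card_filter_add_card_filter_not
        (s := (Ω.powerset).filter (fun s => s.card ≤ d + 1)) (p := fun s => s.card ≤ d)
      have h1 : ((Ω.powerset).filter (fun s => s.card ≤ d + 1)).filter (fun s => s.card ≤ d)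
          = (Ω.powerset).filter (fun s => s.card ≤ d) := by
        rw [filter_filter]
        apply filter_congr; intro s _; simp only [and_iff_right_iff_imp]; omega
      have h2 : ((Ω.powerset).filter (fun s => s.card ≤ d + 1)).filter (fun s => ¬ s.card ≤ d)
          ⊆ Ω.powersetCard (d+1) := by
        intro s hs
        simp only [mem_filter, mem_powerset] at hs
        rw [mem_powersetCard]
        exact ⟨hs.1.1, by omega⟩
      have h2' : (((Ω.powerset).filter (fun s => s.card ≤ d + 1)).filter
          (fun s => ¬ s.card ≤ d)).card ≤ Ω.card ^ (d+1) := by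
        calc _ ≤ (Ω.powersetCard (d+1)).card := card_le_card h2
          _ = Ω.card.choose (d+1) := card_powersetCard _ _
          _ ≤ Ω.card ^ (d+1) := Nat.choose_le_pow _ _
      have IH' := IH hd1
      have hmono : Ω.card ^ (d+1) ≤ Ω.card * (Ω.card + 1) ^ d := by
        rw [pow_succ, mul_comm]
        exact Nat.mul_le_mul_left _ (Nat.pow_le_pow_left (by omega) _)
      calc ((Ω.powerset).filter (fun s => s.card ≤ d + 1)).card
          = ((Ω.powerset).filter (fun s => s.card ≤ d)).card
            + (((Ω.powerset).filter (fun s => s.card ≤ d + 1)).filter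
                (fun s => ¬ s.card ≤ d)).card := by rw [← hsplit, h1]
        _ ≤ (Ω.card + 1) ^ d + Ω.card * (Ω.card + 1) ^ d := by
            have := le_trans h2' hmono; omega
        _ = (Ω.card + 1) ^ (d + 1) := by ring

/-- Sauer–Shelah: a family of subsets of `Ω` with VC dim ≤ d has few members. -/
lemma sauer (Ω : Finset β) (P : Finset (Finset β)) (hsub : ∀ S ∈ P, S ⊆ Ω)
    {d : ℕ} (hd : 1 ≤ d) (hvc : VCDimLE P d) : P.card ≤ (Ω.card + 1) ^ d := by
  rw [vcdimle_iff] at hvc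
  calc P.card ≤ P.shatterer.card := card_le_card_shatterer P
    _ ≤ ((Ω.powerset).filter (fun s => s.card ≤ d)).card := by
        apply card_le_card
        intro s hs
        rw [mem_shatterer] at hs
        simp only [mem_filter, mem_powerset]
        obtain ⟨t, ht, hst⟩ := hs.exists_superset
        exact ⟨hst.trans (hsub t ht), hvc s hs⟩
    _ ≤ (Ω.card + 1) ^ d := card_low_powerset Ω d hd

/-- The (directed) unit-distance graph of a family. -/
def UD (P : Finset (Finset β)) : Finset (Finset β × Finset β) :=
  (P ×ˢ P).filter (fun q => q.1 ⊆ q.2 ∧ (q.2 \ q.1).card = 1)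

lemma mem_UD {P : Finset (Finset β)} {q : Finset β × Finset β} :
    q ∈ UD P ↔ q.1 ∈ P ∧ q.2 ∈ P ∧ ∃ x, x ∉ q.1 ∧ q.2 = insert x q.1 := by
  simp only [UD, mem_filter, mem_product]
  constructor
  · rintro ⟨⟨h1, h2⟩, hsub, hcard⟩
    obtain ⟨x, hx⟩ := Finset.card_eq_one.1 hcard
    refine ⟨h1, h2, x, ?_, ?_⟩
    · have : x ∈ q.2 \ q.1 := hx ▸ mem_singleton_self x
      exact (mem_sdiff.1 this).2
    · ext y
      simp only [mem_insert]
      constructor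
      · intro hy
        by_cases hy1 : y ∈ q.1
        · exact Or.inr hy1
        · left
          have : y ∈ q.2 \ q.1 := mem_sdiff.2 ⟨hy, hy1⟩
          rw [hx] at this; exact mem_singleton.1 this
      · rintro (rfl | hy)
        · have : y ∈ q.2 \ q.1 := hx ▸ mem_singleton_self y
          exact (mem_sdiff.1 this).1
        · exact hsub hy
  · rintro ⟨h1, h2, x, hx, hq⟩
    refine ⟨⟨h1, h2⟩, ?_, ?_⟩
    · rw [hq]; exact subset_insert _ _
    · rw [hq]
      have : insert x q.1 \ q.1 = {x} := by
        ext y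
        simp only [mem_sdiff, mem_insert, mem_singleton]
        constructor
        · rintro ⟨rfl | hy, hy2⟩
          · rfl
          · exact absurd hy hy2
        · rintro rfl; exact ⟨Or.inl rfl, hx⟩
      rw [this, card_singleton]

lemma UD_mono {P Q : Finset (Finset β)} (h : P ⊆ Q) : UD P ⊆ UD Q := by
  intro q hq
  simp only [UD, mem_filter, mem_product] at hq ⊢
  exact ⟨⟨h hq.1.1, h hq.1.2⟩, hq.2⟩

/-- Haussler's unit-distance density lemma. -/
lemma UD_card_le (Ω : Finset β) :
    ∀ (d : ℕ) (P : Finset (Finset β)), (∀ S ∈ P, S ⊆ Ω) → VCDimLE P d →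
      (UD P).card ≤ d * P.card := by
  induction Ω using Finset.cons_induction with
  | empty =>
    intro d P hsub hvc
    have hE : UD P = ∅ := by
      rw [eq_empty_iff_forall_notMem]
      intro q hq
      rw [mem_UD] at hq
      obtain ⟨h1, h2, x, hx, hq2⟩ := hq
      have : x ∈ (∅ : Finset β) := hsub q.2 h2 (hq2 ▸ mem_insert_self x q.1)
      simp at this
    simp [hE]
  | cons x Ω hxΩ IH =>
    intro d P hsub hvc
    rw [vcdimle_iff] at hvc
    -- d = 0 : the family has no two sets at distance 1
    rcases Nat.eq_zero_or_pos d with rfl | hd1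
    · have hE : UD P = ∅ := by
        rw [eq_empty_iff_forall_notMem]
        intro q hq
        rw [mem_UD] at hq
        obtain ⟨h1, h2, y, hy, hq2⟩ := hq
        have hshat : P.Shatters {y} := by
          intro t ht
          rcases Finset.subset_singleton_iff.1 ht with rfl | rfl
          · exact ⟨q.1, h1, by simp [singleton_inter_of_notMem hy]⟩
          · refine ⟨q.2, h2, ?_⟩
            have : y ∈ q.2 := hq2 ▸ mem_insert_self y q.1
            simp [singleton_inter_of_mem this]
        have := hvc {y} hshat
        simp at this
      simp [hE]
    set P0 : Finset (Finset β) := P.filter (fun S => x ∉ S) with hP0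
    set P1 : Finset (Finset β) := (P.filter (fun S => x ∈ S)).image (fun S => S.erase x) with hP1
    set P' := P0 ∪ P1 with hP'
    set P'' := P0 ∩ P1 with hP''
    have hP''char : ∀ A, A ∈ P'' ↔ A ∈ P ∧ x ∉ A ∧ insert x A ∈ P := by
      intro A
      simp only [hP'', hP0, hP1, mem_inter, mem_filter, mem_image]
      constructor
      · rintro ⟨⟨hA, hxA⟩, ⟨T, ⟨hT, hxT⟩, rfl⟩⟩
        refine ⟨hA, hxA, ?_⟩
        rwa [insert_erase hxT]
      · rintro ⟨hA, hxA, hiA⟩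
        exact ⟨⟨hA, hxA⟩, ⟨insert x A, ⟨hiA, mem_insert_self x A⟩, by rw [erase_insert hxA]⟩⟩
    have hsub0 : ∀ S ∈ P0, S ⊆ Ω := by
      intro S hS y hy
      simp only [hP0, mem_filter] at hS
      have := hsub S hS.1 hy
      rw [Finset.mem_cons] at this
      rcases this with rfl | h
      · exact absurd hy hS.2
      · exact h
    have hsub1 : ∀ S ∈ P1, S ⊆ Ω := by
      intro S hS y hy
      simp only [hP1, mem_image, mem_filter] at hS
      obtain ⟨T, ⟨hT, hxT⟩, rfl⟩ := hS
      rw [mem_erase] at hy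
      have := hsub T hT hy.2
      rw [Finset.mem_cons] at this
      rcases this with rfl | h
      · exact absurd rfl hy.1
      · exact h
    have hsub' : ∀ S ∈ P', S ⊆ Ω := by
      intro S hS
      rcases mem_union.1 hS with h | h
      · exact hsub0 S h
      · exact hsub1 S h
    have hxnot : ∀ S ∈ P', x ∉ S := fun S hS hxS => hxΩ (hsub' S hS hxS)
    -- VC dimension of the two derived families
    have hvc' : VCDimLE P' d := by
      rw [vcdimle_iff]
      intro S hS
      have hxS : x ∉ S := by
        obtain ⟨u, hu, hSu⟩ := hS.exists_superset
        exact fun h => hxnot u hu (hSu h)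
      refine hvc S ?_
      intro t ht
      obtain ⟨u, hu, hut⟩ := hS ht
      rcases mem_union.1 hu with h | h
      · simp only [hP0, mem_filter] at h
        exact ⟨u, h.1, hut⟩
      · simp only [hP1, mem_image, mem_filter] at h
        obtain ⟨T, ⟨hT, hxT⟩, rfl⟩ := h
        refine ⟨T, hT, ?_⟩
        rw [← hut]
        ext y
        simp only [mem_inter, mem_erase]
        exact ⟨fun ⟨h1, h2⟩ => ⟨h1, fun he => hxS (he ▸ h1), h2⟩,
          fun ⟨h1, _, h2⟩ => ⟨h1, h2⟩⟩
    have hvc'' : VCDimLE P'' (d - 1) := by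
      rw [vcdimle_iff]
      intro S hS
      have hxS : x ∉ S := by
        obtain ⟨u, hu, hSu⟩ := hS.exists_superset
        have : u ∈ P' := mem_union.2 (Or.inl (mem_of_mem_inter_left hu))
        exact fun h => hxnot u this (hSu h)
      have hP : P.Shatters (insert x S) := by
        intro t ht
        by_cases hxt : x ∈ t
        · obtain ⟨u, hu, hut⟩ := hS (t := t.erase x) (fun y hy => by
            rw [mem_erase] at hy
            rcases mem_insert.1 (ht hy.2) with rfl | h
            · exact absurd rfl hy.1
            · exact h)
          obtain ⟨hu1, hu2, hu3⟩ := (hP''char u).1 hu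
          refine ⟨insert x u, hu3, ?_⟩
          have : insert x S ∩ insert x u = insert x (S ∩ u) := by
            ext y
            simp only [mem_inter, mem_insert]
            tauto
          rw [this, hut, insert_erase hxt]
        · obtain ⟨u, hu, hut⟩ := hS (t := t) (fun y hy => by
            rcases mem_insert.1 (ht hy) with rfl | h
            · exact absurd hy hxt
            · exact h)
          obtain ⟨hu1, hu2, _⟩ := (hP''char u).1 hu
          refine ⟨u, hu1, ?_⟩
          rw [← hut]
          ext y
          simp only [mem_inter, mem_insert]
          constructor
          · rintro ⟨rfl | h1, h2⟩
            · exact absurd h2 hu2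
            · exact ⟨h1, h2⟩
          · rintro ⟨h1, h2⟩
            exact ⟨Or.inr h1, h2⟩
      have := hvc _ hP
      rw [card_insert_of_notMem hxS] at this
      omega
    -- cardinality bookkeeping
    have hcard1 : P1.card = (P.filter (fun S => x ∈ S)).card := by
      rw [hP1]
      apply card_image_of_injOn
      intro S hS T hT hST
      simp only [coe_filter, Set.mem_setOf_eq] at hS hT
      rw [← insert_erase hS.2, show S.erase x = T.erase x from hST, insert_erase hT.2]
    have hcardP : P.card = P'.card + P''.card := by
      have h1 : P'.card + P''.card = P0.card + P1.card := card_union_add_card_inter P0 P1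
      have h2 : P0.card + (P.filter (fun S => x ∈ S)).card = P.card := by
        rw [hP0]
        rw [add_comm]
        exact card_filter_add_card_filter_not (fun S => x ∈ S)
      omega
    -- edge bookkeeping
    set E := UD P with hE
    have hsplit1 := card_filter_add_card_filter_not
      (s := E) (p := fun q => x ∈ q.1)
    have hsplit2 := card_filter_add_card_filter_not
      (s := E.filter (fun q => ¬ x ∈ q.1)) (p := fun q => x ∈ q.2)
    -- edges in direction x
    have c1 : ((E.filter (fun q => ¬ x ∈ q.1)).filter (fun q => x ∈ q.2)).card ≤ P''.card := by
      apply card_le_card_of_injOn Prod.fst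
      · intro q hq
        simp only [mem_coe, mem_filter] at hq
        obtain ⟨⟨hqE, hx1⟩, hx2⟩ := hq
        rw [hE, mem_UD] at hqE
        obtain ⟨h1, h2, y, hy, hq2⟩ := hqE
        have hxy : x = y := by
          rcases mem_insert.1 (hq2 ▸ hx2) with h | h
          · exact h
          · exact absurd h hx1
        rw [mem_coe, hP''char]
        exact ⟨h1, hx1, by rw [← hxy] at hq2; rw [← hq2]; exact h2⟩
      · intro q hq p hp hqp
        simp only [mem_coe, mem_filter] at hq hp
        obtain ⟨⟨hqE, hq1⟩, hq2⟩ := hq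
        obtain ⟨⟨hpE, hp1⟩, hp2⟩ := hp
        rw [hE, mem_UD] at hqE hpE
        obtain ⟨_, _, y, hy, hqy⟩ := hqE
        obtain ⟨_, _, z, hz, hpz⟩ := hpE
        have hxy : x = y := by
          rcases mem_insert.1 (hqy ▸ hq2) with h | h
          · exact h
          · exact absurd h hq1
        have hxz : x = z := by
          rcases mem_insert.1 (hpz ▸ hp2) with h | h
          · exact h
          · exact absurd h hp1
        have : q.2 = p.2 := by rw [hqy, hpz, ← hxy, ← hxz, hqp]
        exact Prod.ext hqp this
    -- edges avoiding x are edges of P0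
    have c2 : (E.filter (fun q => ¬ x ∈ q.1)).filter (fun q => ¬ x ∈ q.2) = UD P0 := by
      ext q
      simp only [mem_filter, hE, mem_UD, hP0]
      constructor
      · rintro ⟨⟨⟨h1, h2, hrel⟩, hx1⟩, hx2⟩
        exact ⟨⟨h1, hx1⟩, ⟨h2, hx2⟩, hrel⟩
      · rintro ⟨⟨h1, hx1⟩, ⟨h2, hx2⟩, hrel⟩
        exact ⟨⟨⟨h1, h2, hrel⟩, hx1⟩, hx2⟩
    -- edges inside x map to edges of P1
    have c3 : (E.filter (fun q => x ∈ q.1)).card ≤ (UD P1).card := by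
      apply card_le_card_of_injOn (fun q => (q.1.erase x, q.2.erase x))
      · intro q hq
        simp only [mem_coe, mem_filter] at hq
        obtain ⟨hqE, hx1⟩ := hq
        rw [hE, mem_UD] at hqE
        obtain ⟨h1, h2, y, hy, hq2⟩ := hqE
        have hx2 : x ∈ q.2 := hq2 ▸ mem_insert_of_mem hx1
        have hyx : y ≠ x := fun h => hy (h ▸ hx1)
        rw [mem_coe]; beta_reduce; rw [mem_UD]
        refine ⟨?_, ?_, y, ?_, ?_⟩
        · simp only [hP1, mem_image, mem_filter]
          exact ⟨q.1, ⟨h1, hx1⟩, rfl⟩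
        · simp only [hP1, mem_image, mem_filter]
          exact ⟨q.2, ⟨h2, hx2⟩, rfl⟩
        · rw [mem_erase]; exact fun h => hy h.2
        · rw [hq2]
          ext z
          simp only [mem_erase, mem_insert]
          constructor
          · rintro ⟨hzx, rfl | hz⟩
            · exact Or.inl rfl
            · exact Or.inr ⟨hzx, hz⟩
          · rintro (rfl | ⟨hzx, hz⟩)
            · exact ⟨hyx, Or.inl rfl⟩
            · exact ⟨hzx, Or.inr hz⟩
      · intro q hq p hp hqp
        simp only [mem_coe, mem_filter] at hq hp
        obtain ⟨hqE, hq1⟩ := hq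
        obtain ⟨hpE, hp1⟩ := hp
        rw [hE, mem_UD] at hqE hpE
        obtain ⟨_, _, y, hy, hqy⟩ := hqE
        obtain ⟨_, _, z, hz, hpz⟩ := hpE
        have hq2 : x ∈ q.2 := hqy ▸ mem_insert_of_mem hq1
        have hp2 : x ∈ p.2 := hpz ▸ mem_insert_of_mem hp1
        have h1' : q.1.erase x = p.1.erase x := congrArg Prod.fst hqp
        have h2' : q.2.erase x = p.2.erase x := congrArg Prod.snd hqp
        have e1 : q.1 = p.1 := by rw [← insert_erase hq1, h1', insert_erase hp1]
        have e2 : q.2 = p.2 := by rw [← insert_erase hq2, h2', insert_erase hp2]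
        exact Prod.ext e1 e2
    have c4 : (UD P0).card + (UD P1).card ≤ (UD P').card + (UD P'').card := by
      have hu : UD P0 ∪ UD P1 ⊆ UD P' := by
        apply union_subset
        · exact UD_mono subset_union_left
        · exact UD_mono subset_union_right
      have hi : UD P0 ∩ UD P1 ⊆ UD P'' := by
        intro q hq
        obtain ⟨hq0, hq1⟩ := mem_inter.1 hq
        rw [mem_UD] at hq0 hq1 ⊢
        obtain ⟨ha1, ha2, hrel⟩ := hq0
        obtain ⟨hb1, hb2, _⟩ := hq1
        exact ⟨mem_inter.2 ⟨ha1, hb1⟩, mem_inter.2 ⟨ha2, hb2⟩, hrel⟩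
      calc (UD P0).card + (UD P1).card
          = (UD P0 ∪ UD P1).card + (UD P0 ∩ UD P1).card :=
            (card_union_add_card_inter _ _).symm
        _ ≤ (UD P').card + (UD P'').card :=
            Nat.add_le_add (card_le_card hu) (card_le_card hi)
    have IH' := IH d P' hsub' hvc'
    have IH'' := IH (d - 1) P'' (fun S hS => hsub0 S (mem_of_mem_inter_left hS)) hvc''
    obtain ⟨e, rfl⟩ : ∃ e, d = e + 1 := ⟨d - 1, by omega⟩
    rw [Nat.add_sub_cancel] at IH''
    calc E.card = (E.filter (fun q => x ∈ q.1)).card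
          + (((E.filter (fun q => ¬ x ∈ q.1)).filter (fun q => x ∈ q.2)).card
            + ((E.filter (fun q => ¬ x ∈ q.1)).filter (fun q => ¬ x ∈ q.2)).card) := by
          omega
      _ ≤ (UD P1).card + (P''.card + (UD P0).card) := by
          rw [c2]
          exact Nat.add_le_add c3 (Nat.add_le_add_right c1 _)
      _ = ((UD P0).card + (UD P1).card) + P''.card := by omega
      _ ≤ ((UD P').card + (UD P'').card) + P''.card := Nat.add_le_add_right c4 _
      _ ≤ ((e + 1) * P'.card + e * P''.card) + P''.card := by
          exact Nat.add_le_add_right (Nat.add_le_add IH' IH'') _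
      _ = (e + 1) * (P'.card + P''.card) := by ring
      _ = (e + 1) * P.card := by rw [← hcardP]

/-- Weighted unit-distance density lemma. -/
lemma UD_weight (Ω : Finset β) (P : Finset (Finset β)) (hsub : ∀ S ∈ P, S ⊆ Ω)
    (d : ℕ) (hvc : VCDimLE P d) (w : Finset β → ℕ) :
    ∑ q ∈ UD P, min (w q.1) (w q.2) ≤ d * ∑ C ∈ P, w C := by
  set N := ∑ C ∈ P, w C with hN
  have hwle : ∀ C ∈ P, w C ≤ N := fun C hC => single_le_sum (fun i _ => Nat.zero_le _) hC
  have hmin : ∀ q ∈ UD P, min (w q.1) (w q.2)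
      = ∑ t ∈ Icc 1 N, if t ≤ w q.1 ∧ t ≤ w q.2 then 1 else 0 := by
    intro q hq
    rw [mem_UD] at hq
    have hfilt : (Icc 1 N).filter (fun t => t ≤ w q.1 ∧ t ≤ w q.2)
        = Icc 1 (min (w q.1) (w q.2)) := by
      ext t
      simp only [mem_filter, mem_Icc, le_min_iff]
      have h1 := hwle q.1 hq.1
      constructor
      · rintro ⟨⟨ht1, _⟩, ht3, ht4⟩; exact ⟨ht1, ht3, ht4⟩
      · rintro ⟨ht1, ht3, ht4⟩; exact ⟨⟨ht1, le_trans ht3 h1⟩, ht3, ht4⟩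
    rw [Finset.sum_boole, hfilt, Nat.card_Icc]
    simp
  rw [Finset.sum_congr rfl hmin, Finset.sum_comm]
  have hstep : ∀ t, (∑ q ∈ UD P, if t ≤ w q.1 ∧ t ≤ w q.2 then 1 else 0)
      ≤ d * (P.filter (fun C => t ≤ w C)).card := by
    intro t
    have hUDfilt : (UD P).filter (fun q => t ≤ w q.1 ∧ t ≤ w q.2)
        = UD (P.filter (fun C => t ≤ w C)) := by
      ext q
      simp only [mem_filter, mem_UD]
      tauto
    rw [Finset.sum_boole, hUDfilt]
    exact UD_card_le Ω d _ (fun S hS => hsub S (mem_of_mem_filter S hS))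
      (vcdimle_mono (filter_subset _ _) hvc)
  calc ∑ t ∈ Icc 1 N, ∑ q ∈ UD P, (if t ≤ w q.1 ∧ t ≤ w q.2 then 1 else 0)
      ≤ ∑ t ∈ Icc 1 N, d * (P.filter (fun C => t ≤ w C)).card :=
        Finset.sum_le_sum (fun t _ => hstep t)
    _ = d * ∑ t ∈ Icc 1 N, (P.filter (fun C => t ≤ w C)).card := by
        rw [Finset.mul_sum]
    _ = d * ∑ C ∈ P, w C := by
        congr 1
        have : ∀ t ∈ Icc 1 N, (P.filter (fun C => t ≤ w C)).card
            = ∑ C ∈ P, if t ≤ w C then 1 else 0 := by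
          intro t _
          rw [Finset.card_filter]
        rw [Finset.sum_congr rfl this, Finset.sum_comm]
        apply Finset.sum_congr rfl
        intro C hC
        have hfilt : (Icc 1 N).filter (fun t => t ≤ w C) = Icc 1 (w C) := by
          ext t
          simp only [mem_filter, mem_Icc]
          have := hwle C hC
          omega
        rw [Finset.sum_boole, hfilt, Nat.card_Icc]
        simp

set_option maxHeartbeats 2000000 in
/-- Abstract Haussler packing lemma. -/
lemma abstract_haussler (d : ℕ) (hd : 1 ≤ d) (Ω : Finset β) (P : Finset (Finset β)) (δ : ℝ)
    (hδ1 : 1 ≤ δ) (hδm : δ ≤ (Ω.card : ℝ)) (hsub : ∀ S ∈ P, S ⊆ Ω) (hvc : VCDimLE P d)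
    (hsep : ∀ S ∈ P, ∀ T ∈ P, S ≠ T → δ ≤ ((((S \ T) ∪ (T \ S)).card : ℕ) : ℝ)) :
    (P.card : ℝ) ≤ 2 * ((10 * d : ℕ) : ℝ) ^ d * ((Ω.card : ℝ) / δ) ^ d := by
  have hδ0 : (0 : ℝ) < δ := lt_of_lt_of_le zero_lt_one hδ1
  have hm1 : (1 : ℝ) ≤ (Ω.card : ℝ) := le_trans hδ1 hδm
  have hm0 : (0 : ℝ) < (Ω.card : ℝ) := lt_of_lt_of_le zero_lt_one hm1
  have hd0 : (0 : ℝ) < (d : ℝ) := by exact_mod_cast hd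
  have hd1R : (1 : ℝ) ≤ (d : ℝ) := by exact_mod_cast hd
  have hcast10 : ((10 * d : ℕ) : ℝ) = 10 * (d : ℝ) := by push_cast; ring
  rw [hcast10]
  by_cases hcase : δ ≤ 5 * d
  · -- small δ : plain Sauer--Shelah
    have hS := sauer Ω P hsub hd hvc
    have h1 : (P.card : ℝ) ≤ ((Ω.card : ℝ) + 1) ^ d := by
      calc (P.card : ℝ) ≤ ((Ω.card + 1 : ℕ) ^ d : ℕ) := by exact_mod_cast hS
        _ = ((Ω.card : ℝ) + 1) ^ d := by push_cast; ring
    have h2 : ((Ω.card : ℝ) + 1) ^ d ≤ (2 * (Ω.card : ℝ)) ^ d := by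
      apply pow_le_pow_left₀ (by positivity)
      linarith
    have h3 : (2 * (Ω.card : ℝ)) ^ d ≤ (10 * (d : ℝ) * ((Ω.card : ℝ) / δ)) ^ d := by
      apply pow_le_pow_left₀ (by positivity)
      have key : 2 * (Ω.card : ℝ) ≤ 10 * (d : ℝ) * (Ω.card : ℝ) / δ := by
        rw [le_div_iff₀ hδ0]; nlinarith [hm0.le]
      have heq : 10 * (d : ℝ) * ((Ω.card : ℝ) / δ) = 10 * (d : ℝ) * (Ω.card : ℝ) / δ := by
        ring
      linarith
    calc (P.card : ℝ) ≤ (10 * (d : ℝ) * ((Ω.card : ℝ) / δ)) ^ d := le_trans h1 (le_trans h2 h3)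
      _ = (10 * (d : ℝ)) ^ d * ((Ω.card : ℝ) / δ) ^ d := mul_pow _ _ _
      _ ≤ 2 * (10 * (d : ℝ)) ^ d * ((Ω.card : ℝ) / δ) ^ d := by
          have hnn : (0:ℝ) ≤ (10 * (d : ℝ)) ^ d * ((Ω.card : ℝ) / δ) ^ d := by positivity
          nlinarith
  · -- large δ : the real argument
    push_neg at hcase
    set m := Ω.card with hm
    set sR : ℝ := 4 * d * m / δ with hsR
    have hsR4 : (4 : ℝ) ≤ sR := by
      rw [hsR]
      rw [le_div_iff₀ hδ0]
      have h1 : δ ≤ (m:ℝ) := hδm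
      nlinarith [hm0.le]
    have hsRpos : (0:ℝ) < sR := by linarith
    set s : ℕ := ⌈sR⌉₊ with hs
    have hslow : sR ≤ (s : ℝ) := Nat.le_ceil sR
    have hsup : (s : ℝ) < sR + 1 := Nat.ceil_lt_add_one (le_of_lt hsRpos)
    have hs4 : (4 : ℝ) ≤ (s:ℝ) := le_trans hsR4 hslow
    have hs1 : 1 ≤ s := by exact_mod_cast le_trans (by norm_num : (1:ℝ) ≤ 4) hs4
    have hd5 : (5 : ℝ) ≤ 5 * d := by linarith
    have hm5 : (5 : ℝ) < (m : ℝ) := lt_of_le_of_lt hd5 (lt_of_lt_of_le hcase hδm)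
    have hsm : s ≤ m := by
      have h1 : sR < 4 * (m:ℝ) / 5 := by
        rw [hsR, div_lt_div_iff₀ hδ0 (by norm_num : (0:ℝ) < 5)]
        nlinarith
      have h2 : (s:ℝ) < (m:ℝ) := by linarith
      exact_mod_cast le_of_lt h2
    obtain ⟨s', hss'⟩ : ∃ s', s = s' + 1 := ⟨s - 1, by omega⟩
    have hs'm : s' ≤ m := by omega
    -- the restriction machinery
    set Q : Finset β → Finset (Finset β) := fun A => P.image (· ∩ A) with hQ
    set w : Finset β → Finset β → ℕ :=
      fun A C => (P.filter (fun S => S ∩ A = C)).card with hw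
    set g : Finset β → β → ℕ := fun A b =>
      ∑ q ∈ (UD (Q A)).filter (fun q => b ∈ q.2 ∧ b ∉ q.1), min (w A q.1) (w A q.2) with hg
    have hQsub : ∀ A, ∀ C ∈ Q A, C ⊆ A := by
      intro A C hC
      simp only [hQ, mem_image] at hC
      obtain ⟨S, _, rfl⟩ := hC
      exact inter_subset_right
    have hQvc : ∀ A, VCDimLE (Q A) d := fun A => vcdimle_restrict hvc A
    have hwsum : ∀ A, ∑ C ∈ Q A, w A C = P.card := by
      intro A
      exact (card_eq_sum_card_image (· ∩ A) P).symm
    -- Step 1 : per sample set A, the weighted edge count is small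
    have step1 : ∀ A : Finset β, ∑ b ∈ A, g A b ≤ d * P.card := by
      intro A
      have hgb : ∀ b, g A b
          = ∑ q ∈ UD (Q A), if b ∈ q.2 ∧ b ∉ q.1 then min (w A q.1) (w A q.2) else 0 := by
        intro b
        simp only [hg]
        exact Finset.sum_filter (fun q => b ∈ q.2 ∧ b ∉ q.1)
          (fun q : Finset β × Finset β => min (w A q.1) (w A q.2))
      have hgsum : ∑ b ∈ A, g A b = ∑ q ∈ UD (Q A), min (w A q.1) (w A q.2) := by
        rw [Finset.sum_congr rfl (fun b _ => hgb b), Finset.sum_comm]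
        apply Finset.sum_congr rfl
        intro q hq
        have hq' : q.1 ∈ Q A ∧ q.2 ∈ Q A ∧ q.1 ⊆ q.2 ∧ (q.2 \ q.1).card = 1 := by
          simp only [UD, mem_filter, mem_product] at hq
          exact ⟨hq.1.1, hq.1.2, hq.2.1, hq.2.2⟩
        have hone : A.filter (fun b => b ∈ q.2 ∧ b ∉ q.1) = q.2 \ q.1 := by
          have hq2A : q.2 ⊆ A := hQsub A q.2 hq'.2.1
          ext b
          simp only [mem_filter, mem_sdiff]
          exact ⟨fun h => ⟨h.2.1, h.2.2⟩, fun h => ⟨hq2A h.1, h.1, h.2⟩⟩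
        rw [← Finset.sum_filter, hone, Finset.sum_const, hq'.2.2.2, one_smul]
      rw [hgsum]
      calc ∑ q ∈ UD (Q A), min (w A q.1) (w A q.2)
          ≤ d * ∑ C ∈ Q A, w A C := by
            apply UD_weight Ω (Q A) _ d (hQvc A) (w A)
            intro C hC
            simp only [hQ, mem_image] at hC
            obtain ⟨S, hS, rfl⟩ := hC
            exact inter_subset_left.trans (hsub S hS)
        _ = d * P.card := by rw [hwsum A]
    -- Step 2 : per (s-1)-sample A', the split weights are large
    have hwpos : ∀ A C, 0 < w A C → C ∈ Q A := by
      intro A C hpos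
      simp only [hw] at hpos
      rw [card_pos] at hpos
      obtain ⟨S, hS⟩ := hpos
      rw [mem_filter] at hS
      simp only [hQ, mem_image]
      exact ⟨S, hS.1, hS.2⟩
    have step2 : ∀ A' ∈ Ω.powersetCard s',
        (δ / 2) * ((P.card : ℝ) - (s:ℝ)^d) ≤ ∑ b ∈ Ω \ A', (g (insert b A') b : ℝ) := by
      intro A' hA'
      rw [mem_powersetCard] at hA'
      obtain ⟨hA'Ω, hA'c⟩ := hA'
      have hQcard : ((Q A').card : ℝ) ≤ (s:ℝ)^d := by
        have h := sauer A' (Q A') (hQsub A') hd (hQvc A')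
        rw [hA'c] at h
        have h2 : ((Q A').card : ℝ) ≤ (((s' + 1) ^ d : ℕ) : ℝ) := by exact_mod_cast h
        have h3 : (((s' + 1) ^ d : ℕ) : ℝ) = (s:ℝ)^d := by
          rw [hss']; push_cast; ring
        linarith
      set k0 : Finset β → β → ℕ :=
        fun C b => (P.filter (fun S => S ∩ A' = C ∧ b ∉ S)).card with hk0
      set k1 : Finset β → β → ℕ :=
        fun C b => (P.filter (fun S => S ∩ A' = C ∧ b ∈ S)).card with hk1
      have hsplitw : ∀ C b, k1 C b + k0 C b = w A' C := by
        intro C b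
        simp only [hk0, hk1, hw]
        rw [← filter_filter, ← filter_filter]
        exact card_filter_add_card_filter_not (fun S => b ∈ S)
      -- per-class estimate
      have perC : ∀ C ∈ Q A', (δ/2) * ((w A' C : ℝ) - 1)
          ≤ ∑ b ∈ Ω \ A', ((min (k0 C b) (k1 C b) : ℕ) : ℝ) := by
        intro C hC
        set fib := P.filter (fun S => S ∩ A' = C) with hfib
        have hkw : fib.card = w A' C := by simp only [hfib, hw]
        have hkpos : 0 < fib.card := by
          simp only [hQ, mem_image] at hC
          obtain ⟨S, hS, rfl⟩ := hC
          exact card_pos.2 ⟨S, mem_filter.2 ⟨hS, rfl⟩⟩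
        have hfibC : ∀ S ∈ fib, S ∈ P ∧ S ∩ A' = C := by
          intro S hS
          rw [hfib, mem_filter] at hS
          exact hS
        -- the difference set of a pair in the same fiber avoids A'
        have hDsub : ∀ r : Finset β × Finset β, r ∈ fib ×ˢ fib →
            ((Ω \ A').filter (fun b => b ∈ r.1 ∧ b ∉ r.2)) = r.1 \ r.2 := by
          intro r hr
          rw [mem_product] at hr
          have h1 := hfibC _ hr.1
          have h2 := hfibC _ hr.2
          ext b
          simp only [mem_filter, mem_sdiff]
          constructor
          · rintro ⟨_, hb1, hb2⟩; exact ⟨hb1, hb2⟩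
          · rintro ⟨hb1, hb2⟩
            refine ⟨⟨hsub _ h1.1 hb1, fun hbA' => ?_⟩, hb1, hb2⟩
            have hbC : b ∈ C := h1.2 ▸ mem_inter.2 ⟨hb1, hbA'⟩
            have : b ∈ r.2 ∩ A' := h2.2.symm ▸ hbC
            exact hb2 (mem_inter.1 this).1
        have hDsub' : ∀ r : Finset β × Finset β, r ∈ fib ×ˢ fib →
            ((Ω \ A').filter (fun b => b ∉ r.1 ∧ b ∈ r.2)) = r.2 \ r.1 := by
          intro r hr
          rw [mem_product] at hr
          have h1 := hfibC _ hr.1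
          have h2 := hfibC _ hr.2
          ext b
          simp only [mem_filter, mem_sdiff]
          constructor
          · rintro ⟨_, hb1, hb2⟩; exact ⟨hb2, hb1⟩
          · rintro ⟨hb1, hb2⟩
            refine ⟨⟨hsub _ h2.1 hb1, fun hbA' => ?_⟩, hb2, hb1⟩
            have hbC : b ∈ C := h2.2 ▸ mem_inter.2 ⟨hb1, hbA'⟩
            have : b ∈ r.1 ∩ A' := h1.2.symm ▸ hbC
            exact hb2 (mem_inter.1 this).1
        -- product identities
        have hprod1 : ∀ b, k1 C b * k0 C b
            = ((fib ×ˢ fib).filter (fun r => b ∈ r.1 ∧ b ∉ r.2)).card := by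
          intro b
          simp only [hk0, hk1, hfib]
          rw [← card_product]
          congr 1
          ext r
          simp only [mem_product, mem_filter]
          tauto
        have hprod0 : ∀ b, k0 C b * k1 C b
            = ((fib ×ˢ fib).filter (fun r => b ∉ r.1 ∧ b ∈ r.2)).card := by
          intro b
          simp only [hk0, hk1, hfib]
          rw [← card_product]
          congr 1
          ext r
          simp only [mem_product, mem_filter]
          tauto
        -- the double count over pairs
        have e1 : ∑ b ∈ Ω \ A', k1 C b * k0 C b
            = ∑ r ∈ fib ×ˢ fib, (r.1 \ r.2).card := by
          rw [Finset.sum_congr rfl (fun b _ => hprod1 b)]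
          rw [Finset.sum_congr rfl
            (fun b _ => Finset.card_filter (fun r : Finset β × Finset β => b ∈ r.1 ∧ b ∉ r.2) _)]
          rw [Finset.sum_comm]
          apply Finset.sum_congr rfl
          intro r hr
          rw [← Finset.card_filter, hDsub r hr]
        have e0 : ∑ b ∈ Ω \ A', k0 C b * k1 C b
            = ∑ r ∈ fib ×ˢ fib, (r.2 \ r.1).card := by
          rw [Finset.sum_congr rfl (fun b _ => hprod0 b)]
          rw [Finset.sum_congr rfl
            (fun b _ => Finset.card_filter (fun r : Finset β × Finset β => b ∉ r.1 ∧ b ∈ r.2) _)]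
          rw [Finset.sum_comm]
          apply Finset.sum_congr rfl
          intro r hr
          rw [← Finset.card_filter, hDsub' r hr]
        -- diagonal counting
        have hdiagc : ((fib ×ˢ fib).filter (fun r => r.1 = r.2)).card = fib.card := by
          apply Finset.card_bij' (fun (r : Finset β × Finset β) _ => r.1)
            (fun S _ => ((S, S) : Finset β × Finset β))
          · intro r hr
            rw [mem_filter, mem_product] at hr
            exact hr.1.1
          · intro S hS
            rw [mem_filter, mem_product]
            exact ⟨⟨hS, hS⟩, rfl⟩
          · intro r hr
            rw [mem_filter] at hr
            exact Prod.ext rfl hr.2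
          · intro S hS
            rfl
        have hoffc : ((fib ×ˢ fib).filter (fun r => ¬ r.1 = r.2)).card
            = fib.card * fib.card - fib.card := by
          have := card_filter_add_card_filter_not
            (s := fib ×ˢ fib) (p := fun r => r.1 = r.2)
          rw [hdiagc, card_product] at this
          omega
        -- lower bound via separation
        have hsum2 : ((fib.card * fib.card - fib.card : ℕ) : ℝ) * δ
            ≤ ∑ r ∈ fib ×ˢ fib, (((r.1 \ r.2).card + (r.2 \ r.1).card : ℕ) : ℝ) := by
          have hperR : ∀ r ∈ (fib ×ˢ fib).filter (fun r => ¬ r.1 = r.2),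
              δ ≤ (((r.1 \ r.2).card + (r.2 \ r.1).card : ℕ) : ℝ) := by
            intro r hr
            rw [mem_filter, mem_product] at hr
            obtain ⟨⟨ha, hb⟩, hne⟩ := hr
            have h1 := hfibC _ ha
            have h2 := hfibC _ hb
            have := hsep r.1 h1.1 r.2 h2.1 hne
            have hdisj : Disjoint (r.1 \ r.2) (r.2 \ r.1) := disjoint_sdiff_sdiff
            rwa [card_union_of_disjoint hdisj] at this
          have h2 := Finset.card_nsmul_le_sum
            ((fib ×ˢ fib).filter (fun r => ¬ r.1 = r.2))
            (fun r => (((r.1 \ r.2).card + (r.2 \ r.1).card : ℕ) : ℝ)) δ hperR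
          rw [nsmul_eq_mul, hoffc] at h2
          have h3 : ∑ r ∈ (fib ×ˢ fib).filter (fun r => ¬ r.1 = r.2),
                (((r.1 \ r.2).card + (r.2 \ r.1).card : ℕ) : ℝ)
              ≤ ∑ r ∈ fib ×ˢ fib, (((r.1 \ r.2).card + (r.2 \ r.1).card : ℕ) : ℝ) := by
            apply Finset.sum_le_sum_of_subset_of_nonneg (filter_subset _ _)
            intro r _ _
            positivity
          linarith
        -- pointwise: product below weight times min
        have hminN : ∀ b, k1 C b * k0 C b + k0 C b * k1 C b
            ≤ 2 * w A' C * min (k0 C b) (k1 C b) := by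
          intro b
          have hsplit := hsplitw C b
          rcases le_total (k0 C b) (k1 C b) with h | h
          · rw [min_eq_left h]
            have h1 : k1 C b * k0 C b ≤ w A' C * k0 C b :=
              Nat.mul_le_mul_right _ (by omega)
            calc k1 C b * k0 C b + k0 C b * k1 C b
                = k1 C b * k0 C b + k1 C b * k0 C b := by rw [Nat.mul_comm (k0 C b) (k1 C b)]
              _ ≤ w A' C * k0 C b + w A' C * k0 C b := Nat.add_le_add h1 h1
              _ = 2 * w A' C * k0 C b := by ring
          · rw [min_eq_right h]
            have h1 : k0 C b * k1 C b ≤ w A' C * k1 C b :=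
              Nat.mul_le_mul_right _ (by omega)
            calc k1 C b * k0 C b + k0 C b * k1 C b
                = k0 C b * k1 C b + k0 C b * k1 C b := by rw [Nat.mul_comm (k0 C b) (k1 C b)]
              _ ≤ w A' C * k1 C b + w A' C * k1 C b := Nat.add_le_add h1 h1
              _ = 2 * w A' C * k1 C b := by ring
        -- assemble in ℕ then ℝ
        have hNsum : ∑ r ∈ fib ×ˢ fib, ((r.1 \ r.2).card + (r.2 \ r.1).card)
            ≤ 2 * w A' C * ∑ b ∈ Ω \ A', min (k0 C b) (k1 C b) := by
          have h4 : ∑ r ∈ fib ×ˢ fib, ((r.1 \ r.2).card + (r.2 \ r.1).card)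
              = ∑ b ∈ Ω \ A', (k1 C b * k0 C b + k0 C b * k1 C b) := by
            rw [Finset.sum_add_distrib, Finset.sum_add_distrib, e1, e0]
          rw [h4, Finset.mul_sum]
          exact Finset.sum_le_sum (fun b _ => hminN b)
        -- conclude
        have hkR : (0:ℝ) < (w A' C : ℝ) := by
          rw [← hkw]; exact_mod_cast hkpos
        have hcast1 : ((fib.card * fib.card - fib.card : ℕ) : ℝ)
            = (w A' C : ℝ) * ((w A' C : ℝ) - 1) := by
          have hle : fib.card ≤ fib.card * fib.card := Nat.le_mul_of_pos_left _ hkpos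
          rw [Nat.cast_sub hle]
          push_cast
          rw [hkw]
          ring
        have hcast2 : ∑ r ∈ fib ×ˢ fib, (((r.1 \ r.2).card + (r.2 \ r.1).card : ℕ) : ℝ)
            = ((∑ r ∈ fib ×ˢ fib, ((r.1 \ r.2).card + (r.2 \ r.1).card) : ℕ) : ℝ) := by
          rw [Nat.cast_sum]
        have hcast3 : ((2 * w A' C * ∑ b ∈ Ω \ A', min (k0 C b) (k1 C b) : ℕ) : ℝ)
            = 2 * (w A' C : ℝ) * ∑ b ∈ Ω \ A', ((min (k0 C b) (k1 C b) : ℕ) : ℝ) := by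
          push_cast
          ring
        have main : (w A' C : ℝ) * ((w A' C : ℝ) - 1) * δ
            ≤ 2 * (w A' C : ℝ) * ∑ b ∈ Ω \ A', ((min (k0 C b) (k1 C b) : ℕ) : ℝ) := by
          have h5 : ((∑ r ∈ fib ×ˢ fib, ((r.1 \ r.2).card + (r.2 \ r.1).card) : ℕ) : ℝ)
              ≤ ((2 * w A' C * ∑ b ∈ Ω \ A', min (k0 C b) (k1 C b) : ℕ) : ℝ) := by
            exact_mod_cast hNsum
          rw [hcast3] at h5
          rw [← hcast1]
          calc ((fib.card * fib.card - fib.card : ℕ) : ℝ) * δ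
              ≤ ∑ r ∈ fib ×ˢ fib, (((r.1 \ r.2).card + (r.2 \ r.1).card : ℕ) : ℝ) := hsum2
            _ = _ := hcast2
            _ ≤ _ := h5
        have h9 : (δ/2)*((w A' C : ℝ)-1) * (2*(w A' C : ℝ))
            ≤ (∑ b ∈ Ω \ A', ((min (k0 C b) (k1 C b) : ℕ) : ℝ)) * (2*(w A' C : ℝ)) := by
          calc (δ/2)*((w A' C : ℝ)-1) * (2*(w A' C : ℝ))
              = (w A' C : ℝ) * ((w A' C : ℝ) - 1) * δ := by ring
            _ ≤ 2 * (w A' C : ℝ) * ∑ b ∈ Ω \ A', ((min (k0 C b) (k1 C b) : ℕ) : ℝ) := main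
            _ = _ := by ring
        exact le_of_mul_le_mul_right h9 (by positivity)
      -- bound the split sums by the edge sums
      have hbound : ∀ b ∈ Ω \ A',
          ∑ C ∈ Q A', min (k0 C b) (k1 C b) ≤ g (insert b A') b := by
        intro b hb
        obtain ⟨hbΩ, hbA'⟩ := mem_sdiff.1 hb
        have hw0 : ∀ C ∈ Q A', w (insert b A') C = k0 C b := by
          intro C hC
          have hCA' : C ⊆ A' := hQsub A' C hC
          have hbC : b ∉ C := fun h => hbA' (hCA' h)
          simp only [hw, hk0]
          congr 1
          ext S
          simp only [mem_filter]
          constructor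
          · rintro ⟨hS, hSC⟩
            have hbS : b ∉ S := fun h => hbC (hSC ▸ mem_inter.2 ⟨h, mem_insert_self b A'⟩)
            refine ⟨hS, ?_, hbS⟩
            rw [← hSC]
            ext y
            simp only [mem_inter, mem_insert]
            constructor
            · rintro ⟨hy1, hy2⟩; exact ⟨hy1, Or.inr hy2⟩
            · rintro ⟨hy1, rfl | hy2⟩
              · exact absurd hy1 hbS
              · exact ⟨hy1, hy2⟩
          · rintro ⟨hS, hSC, hbS⟩
            refine ⟨hS, ?_⟩
            rw [← hSC]
            ext y
            simp only [mem_inter, mem_insert]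
            constructor
            · rintro ⟨hy1, rfl | hy2⟩
              · exact absurd hy1 hbS
              · exact ⟨hy1, hy2⟩
            · rintro ⟨hy1, hy2⟩; exact ⟨hy1, Or.inr hy2⟩
        have hw1 : ∀ C ∈ Q A', w (insert b A') (insert b C) = k1 C b := by
          intro C hC
          have hCA' : C ⊆ A' := hQsub A' C hC
          have hbC : b ∉ C := fun h => hbA' (hCA' h)
          simp only [hw, hk1]
          congr 1
          ext S
          simp only [mem_filter]
          constructor
          · rintro ⟨hS, hSC⟩
            have hbS : b ∈ S := by
              have : b ∈ S ∩ insert b A' := hSC.symm ▸ mem_insert_self b C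
              exact (mem_inter.1 this).1
            refine ⟨hS, ?_, hbS⟩
            ext y
            simp only [mem_inter]
            constructor
            · rintro ⟨hy1, hy2⟩
              have : y ∈ S ∩ insert b A' := mem_inter.2 ⟨hy1, mem_insert_of_mem hy2⟩
              rw [hSC] at this
              rcases mem_insert.1 this with rfl | hyC
              · exact absurd hy2 hbA'
              · exact hyC
            · intro hyC
              have : y ∈ S ∩ insert b A' := hSC.symm ▸ mem_insert_of_mem hyC
              exact ⟨(mem_inter.1 this).1, hCA' hyC⟩
          · rintro ⟨hS, hSC, hbS⟩
            refine ⟨hS, ?_⟩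
            ext y
            simp only [mem_inter, mem_insert]
            constructor
            · rintro ⟨hy1, rfl | hy2⟩
              · exact Or.inl rfl
              · right
                rw [← hSC]
                exact mem_inter.2 ⟨hy1, hy2⟩
            · rintro (rfl | hyC)
              · exact ⟨hbS, Or.inl rfl⟩
              · rw [← hSC] at hyC
                exact ⟨(mem_inter.1 hyC).1, Or.inr (mem_inter.1 hyC).2⟩
        set Qs := (Q A').filter (fun C => 0 < k0 C b ∧ 0 < k1 C b) with hQs
        have hzero : ∑ C ∈ Q A', min (k0 C b) (k1 C b)
            = ∑ C ∈ Qs, min (k0 C b) (k1 C b) := by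
          symm
          apply Finset.sum_subset (filter_subset _ _)
          intro C hC hCn
          have h0 : k0 C b = 0 ∨ k1 C b = 0 := by
            by_contra hcon
            push_neg at hcon
            exact hCn (mem_filter.2 ⟨hC, Nat.pos_of_ne_zero hcon.1,
              Nat.pos_of_ne_zero hcon.2⟩)
          rcases h0 with h | h <;> simp [h]
        rw [hzero]
        have himg : ∀ C ∈ Qs, ((C, insert b C) : Finset β × Finset β)
            ∈ (UD (Q (insert b A'))).filter (fun q => b ∈ q.2 ∧ b ∉ q.1) := by
          intro C hC
          simp only [hQs, mem_filter] at hC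
          obtain ⟨hCQ, hk0pos, hk1pos⟩ := hC
          have hCA' : C ⊆ A' := hQsub A' C hCQ
          have hbC : b ∉ C := fun h => hbA' (hCA' h)
          rw [mem_filter]
          refine ⟨?_, mem_insert_self b C, hbC⟩
          rw [mem_UD]
          refine ⟨hwpos _ _ (by rw [hw0 C hCQ]; exact hk0pos),
            hwpos _ _ (by rw [hw1 C hCQ]; exact hk1pos), b, hbC, rfl⟩
        calc ∑ C ∈ Qs, min (k0 C b) (k1 C b)
            = ∑ C ∈ Qs, min (w (insert b A') C) (w (insert b A') (insert b C)) := by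
              apply Finset.sum_congr rfl
              intro C hC
              simp only [hQs, mem_filter] at hC
              rw [hw0 C hC.1, hw1 C hC.1]
          _ = ∑ q ∈ Qs.image (fun C => ((C, insert b C) : Finset β × Finset β)),
                min (w (insert b A') q.1) (w (insert b A') q.2) := by
              rw [Finset.sum_image]
              intro C1 _ C2 _ h
              exact congrArg Prod.fst h
          _ ≤ g (insert b A') b := by
              simp only [hg]
              apply Finset.sum_le_sum_of_subset
              intro q hq
              rw [mem_image] at hq
              obtain ⟨C, hC, rfl⟩ := hq
              exact himg C hC
      -- assemble step 2
      have hsumC := Finset.sum_le_sum perC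
      have hLHS : ∑ C ∈ Q A', ((δ/2) * ((w A' C:ℝ) - 1))
          = (δ/2) * ((P.card:ℝ) - ((Q A').card:ℝ)) := by
        rw [← Finset.mul_sum]
        congr 1
        rw [Finset.sum_sub_distrib, Finset.sum_const, nsmul_eq_mul, mul_one]
        congr 1
        rw [← Nat.cast_sum]
        exact_mod_cast congrArg (fun k : ℕ => (k : ℝ)) (hwsum A')
      have hswap : ∑ C ∈ Q A', ∑ b ∈ Ω \ A', ((min (k0 C b) (k1 C b) : ℕ) : ℝ)
          = ∑ b ∈ Ω \ A', ∑ C ∈ Q A', ((min (k0 C b) (k1 C b) : ℕ) : ℝ) :=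
        Finset.sum_comm
      have hfin : ∑ b ∈ Ω \ A', ∑ C ∈ Q A', ((min (k0 C b) (k1 C b) : ℕ) : ℝ)
          ≤ ∑ b ∈ Ω \ A', (g (insert b A') b : ℝ) := by
        apply Finset.sum_le_sum
        intro b hb
        rw [← Nat.cast_sum]
        exact_mod_cast hbound b hb
      have hstart : (δ/2) * ((P.card:ℝ) - (s:ℝ)^d)
          ≤ (δ/2) * ((P.card:ℝ) - ((Q A').card:ℝ)) := by
        apply mul_le_mul_of_nonneg_left _ (by positivity)
        linarith
      calc (δ/2) * ((P.card:ℝ) - (s:ℝ)^d)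
          ≤ (δ/2) * ((P.card:ℝ) - ((Q A').card:ℝ)) := hstart
        _ = ∑ C ∈ Q A', ((δ/2) * ((w A' C:ℝ) - 1)) := hLHS.symm
        _ ≤ ∑ C ∈ Q A', ∑ b ∈ Ω \ A', ((min (k0 C b) (k1 C b) : ℕ) : ℝ) := hsumC
        _ = ∑ b ∈ Ω \ A', ∑ C ∈ Q A', ((min (k0 C b) (k1 C b) : ℕ) : ℝ) := hswap
        _ ≤ ∑ b ∈ Ω \ A', (g (insert b A') b : ℝ) := hfin
    -- Step 3 : double counting identity
    have step3 : ∑ A' ∈ Ω.powersetCard s', ∑ b ∈ Ω \ A', g (insert b A') b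
        = ∑ A ∈ Ω.powersetCard s, ∑ b ∈ A, g A b := by
      conv_lhs => rw [Finset.sum_sigma']
      conv_rhs => rw [Finset.sum_sigma']
      apply Finset.sum_bij'
        (i := fun (r : Σ _ : Finset β, β) (_ : r ∈ (Ω.powersetCard s').sigma (fun A' => Ω \ A')) =>
          (⟨insert r.2 r.1, r.2⟩ : Σ _ : Finset β, β))
        (j := fun (r : Σ _ : Finset β, β) (_ : r ∈ (Ω.powersetCard s).sigma (fun A => A)) =>
          (⟨r.1.erase r.2, r.2⟩ : Σ _ : Finset β, β))
      · rintro ⟨A', b⟩ hr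
        simp only [mem_sigma, mem_powersetCard, mem_sdiff] at hr ⊢
        obtain ⟨⟨hA'Ω, hA'c⟩, hbΩ, hbA'⟩ := hr
        refine ⟨⟨insert_subset hbΩ hA'Ω, ?_⟩, mem_insert_self _ _⟩
        rw [card_insert_of_notMem hbA', hA'c, ← hss']
      · rintro ⟨A, b⟩ hr
        simp only [mem_sigma, mem_powersetCard, mem_sdiff] at hr ⊢
        obtain ⟨⟨hAΩ, hAc⟩, hbA⟩ := hr
        refine ⟨⟨(erase_subset _ _).trans hAΩ, ?_⟩, hAΩ hbA, notMem_erase _ _⟩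
        rw [card_erase_of_mem hbA, hAc]
        omega
      · rintro ⟨A', b⟩ hr
        simp only [mem_sigma, mem_powersetCard, mem_sdiff] at hr
        simp [Finset.erase_insert hr.2.2]
      · rintro ⟨A, b⟩ hr
        simp only [mem_sigma, mem_powersetCard, mem_sdiff] at hr
        simp [Finset.insert_erase hr.2]
      · rintro ⟨A', b⟩ hr
        rfl
    -- Step 4 : combine
    have hL : ((Ω.powersetCard s').card : ℝ) * ((δ/2) * ((P.card:ℝ) - (s:ℝ)^d))
        ≤ ((Ω.powersetCard s).card : ℝ) * ((d : ℝ) * P.card) := by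
      have hlow := Finset.card_nsmul_le_sum (Ω.powersetCard s')
        (fun A' => ∑ b ∈ Ω \ A', (g (insert b A') b : ℝ)) _ step2
      rw [nsmul_eq_mul] at hlow
      have hmid : ∑ A' ∈ Ω.powersetCard s', ∑ b ∈ Ω \ A', (g (insert b A') b : ℝ)
          = ((∑ A ∈ Ω.powersetCard s, ∑ b ∈ A, g A b : ℕ) : ℝ) := by
        rw [← step3]
        push_cast
        rfl
      have hupN : ∑ A ∈ Ω.powersetCard s, ∑ b ∈ A, g A b
          ≤ (Ω.powersetCard s).card * (d * P.card) := by
        have h := Finset.sum_le_card_nsmul (Ω.powersetCard s)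
          (fun A => ∑ b ∈ A, g A b) (d * P.card) (fun A _ => step1 A)
        simpa using h
      have hup : ((∑ A ∈ Ω.powersetCard s, ∑ b ∈ A, g A b : ℕ) : ℝ)
          ≤ ((Ω.powersetCard s).card : ℝ) * ((d:ℝ) * P.card) := by
        exact_mod_cast hupN
      rw [hmid] at hlow
      linarith
    rw [card_powersetCard, card_powersetCard] at hL
    have hchoosepos : (0:ℝ) < (m.choose s' : ℝ) := by exact_mod_cast Nat.choose_pos hs'm
    have hs0R : (0:ℝ) < (s:ℝ) := by linarith
    have hchoose : ((m.choose s : ℕ) : ℝ) * (s : ℝ) = ((m.choose s' : ℕ):ℝ) * ((m:ℝ) - s') := by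
      have hnat := Nat.choose_succ_right_eq m s'
      rw [← hss'] at hnat
      have := congrArg (fun k : ℕ => (k : ℝ)) hnat
      push_cast [Nat.cast_sub hs'm] at this
      rw [hss']
      push_cast
      rw [hss'] at this
      push_cast at this
      linarith
    have hCs : ((m.choose s : ℕ):ℝ) = ((m.choose s' : ℕ):ℝ) * ((m:ℝ) - s') / s := by
      rw [eq_div_iff hs0R.ne']
      exact hchoose
    have hkey : (δ/2) * ((P.card:ℝ) - (s:ℝ)^d)
        ≤ ((m:ℝ) - s')/(s:ℝ) * ((d:ℝ) * P.card) := by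
      have h2 : ((m.choose s' : ℕ):ℝ) * ((δ/2) * ((P.card:ℝ) - (s:ℝ)^d))
          ≤ ((m.choose s' : ℕ):ℝ) * (((m:ℝ)-s')/(s:ℝ) * ((d:ℝ)*P.card)) := by
        calc ((m.choose s' : ℕ):ℝ) * ((δ/2) * ((P.card:ℝ) - (s:ℝ)^d))
            ≤ ((m.choose s : ℕ):ℝ) * ((d:ℝ)*P.card) := hL
          _ = ((m.choose s' : ℕ):ℝ) * (((m:ℝ)-s')/(s:ℝ) * ((d:ℝ)*P.card)) := by
              rw [hCs]; ring
      exact le_of_mul_le_mul_left h2 hchoosepos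
    have hp0 : (0:ℝ) ≤ (P.card : ℝ) := Nat.cast_nonneg _
    have hfrac : ((m:ℝ) - s')/(s:ℝ) * ((d:ℝ)*(P.card:ℝ)) ≤ δ/4 * P.card := by
      have hms' : ((m:ℝ) - s') ≤ (m:ℝ) := by
        have : (0:ℝ) ≤ (s' : ℝ) := Nat.cast_nonneg _
        linarith
      have h1 : ((m:ℝ) - s')/(s:ℝ) * (d:ℝ) ≤ δ/4 := by
        rw [div_mul_eq_mul_div, div_le_iff₀ hs0R]
        have hc : sR * δ = 4*(d:ℝ)*m := by
          rw [hsR]; exact div_mul_cancel₀ _ hδ0.ne'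
        have h2 : δ/4 * sR = (d:ℝ) * m := by
          calc δ/4 * sR = sR * δ / 4 := by ring
            _ = 4*(d:ℝ)*m/4 := by rw [hc]
            _ = (d:ℝ)*m := by ring
        have h3 : δ/4 * sR ≤ δ/4 * (s:ℝ) :=
          mul_le_mul_of_nonneg_left hslow (by positivity)
        have h5 : ((m:ℝ) - s')*(d:ℝ) ≤ (m:ℝ)*(d:ℝ) :=
          mul_le_mul_of_nonneg_right hms' hd0.le
        have h6 : (m:ℝ)*(d:ℝ) = (d:ℝ)*m := by ring
        linarith
      calc ((m:ℝ)-s')/(s:ℝ)*((d:ℝ)*(P.card:ℝ))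
          = (((m:ℝ)-s')/(s:ℝ)*(d:ℝ))*(P.card:ℝ) := by ring
        _ ≤ δ/4*(P.card:ℝ) := mul_le_mul_of_nonneg_right h1 hp0
    have hfinal : (P.card:ℝ) ≤ 2*(s:ℝ)^d := by
      have h4 : δ/4 * (P.card:ℝ) ≤ δ/4 * (2*(s:ℝ)^d) := by
        have h4a : δ/4 * (P.card:ℝ) ≤ δ/2 * (s:ℝ)^d := by linarith
        have h4b : δ/2 * (s:ℝ)^d = δ/4 * (2*(s:ℝ)^d) := by ring
        linarith
      exact le_of_mul_le_mul_left h4 (by positivity)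
    have hs5 : (s:ℝ) ≤ 5*(d:ℝ)*m/δ := by
      have h2 : δ ≤ (d:ℝ)*m := by
        have := mul_le_mul_of_nonneg_right hd1R hm0.le
        rw [one_mul] at this
        linarith
      have h3 : (1:ℝ) ≤ (d:ℝ)*m/δ := by
        rw [le_div_iff₀ hδ0]; linarith
      have h4 : 5*(d:ℝ)*m/δ - 4*(d:ℝ)*m/δ = (d:ℝ)*m/δ := by ring
      have h5 : sR + 1 ≤ 5*(d:ℝ)*m/δ := by
        rw [hsR]; linarith
      linarith
    have hpow : (s:ℝ)^d ≤ (5*(d:ℝ)*m/δ)^d := pow_le_pow_left₀ (Nat.cast_nonneg s) hs5 d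
    have heq2 : (5*(d:ℝ)*m/δ)^d = (5*(d:ℝ))^d * ((m:ℝ)/δ)^d := by
      rw [← mul_pow]
      congr 1
      ring
    have hle3 : (5*(d:ℝ))^d ≤ (10*(d:ℝ))^d :=
      pow_le_pow_left₀ (by positivity) (by linarith) d
    have hnn : (0:ℝ) ≤ ((m:ℝ)/δ)^d := by positivity
    calc (P.card:ℝ) ≤ 2*(s:ℝ)^d := hfinal
      _ ≤ 2*((5*(d:ℝ))^d * ((m:ℝ)/δ)^d) := by rw [← heq2]; linarith
      _ ≤ 2 * (10*(d:ℝ))^d * ((m:ℝ)/δ)^d := by nlinarith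


end Aux

/-- Haussler's packing lemma, dual form: for every `d ≥ 1` there is a constant
`c₁ = c₁(d)` such that if `F` has dual VC-dimension at most `d` and `X` is
`δ`-separated (with `1 ≤ δ ≤ |F|`), then `|X| ≤ c₁·(|F|/δ)^d`. -/
theorem haussler_packing (d : ℕ) (hd : 1 ≤ d) :
    ∃ c₁ : ℝ, 0 < c₁ ∧
      ∀ (n : ℕ) (F : Finset (Finset (Fin n))) (δ : ℝ) (X : Finset (Fin n)),
        1 ≤ δ → δ ≤ (F.card : ℝ) → DualVCDimLE F d → Separated F δ X →
        (X.card : ℝ) ≤ c₁ * ((F.card : ℝ) / δ) ^ d := by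
  refine ⟨2 * ((10 * d : ℕ) : ℝ) ^ d, by positivity, ?_⟩
  intro n F δ X hδ1 hδF hdual hsep
  classical
  set Sv : Fin n → Finset (Finset (Fin n)) := fun v => F.filter (fun A => v ∈ A) with hSv
  set P : Finset (Finset (Finset (Fin n))) := X.image Sv with hP
  have hinj : Set.InjOn Sv X := by
    intro u hu v hv huv
    by_contra hne
    have h1 : (1 : ℝ) ≤ (crossCount F u v : ℝ) := le_trans hδ1 (hsep u hu v hv hne)
    have h2 : 0 < crossCount F u v := by exact_mod_cast lt_of_lt_of_le zero_lt_one h1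
    rw [crossCount, card_pos] at h2
    obtain ⟨A, hA⟩ := h2
    simp only [mem_filter] at hA
    obtain ⟨hAF, hA2⟩ := hA
    have := Finset.ext_iff.1 huv A
    simp only [hSv, mem_filter] at this
    tauto
  have hcard : P.card = X.card := Finset.card_image_of_injOn hinj
  rw [← hcard]
  apply abstract_haussler d hd F P δ hδ1 hδF
  · intro S hS
    simp only [hP, mem_image] at hS
    obtain ⟨v, _, rfl⟩ := hS
    exact filter_subset _ _
  · apply vcdimle_mono _ hdual
    rw [hP]
    unfold dualSystem
    apply image_subset_image (subset_univ X)
  · intro S hS T hT hST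
    simp only [hP, mem_image] at hS hT
    obtain ⟨u, hu, rfl⟩ := hS
    obtain ⟨v, hv, rfl⟩ := hT
    have hne : u ≠ v := fun h => hST (by rw [h])
    have hkey : (Sv u \ Sv v) ∪ (Sv v \ Sv u)
        = F.filter (fun A => (u ∈ A ∧ v ∉ A) ∨ (v ∈ A ∧ u ∉ A)) := by
      ext A
      simp only [mem_union, mem_sdiff, hSv, mem_filter]
      tauto
    rw [hkey]
    exact hsep u hu v hv hne
end

section
/- For every d ≥ 2 and m ≥ 1, r_d(3;m) ≥ 2^m + 1; moreover the recursive two-block construction yields an m-coloring of the edges of K_{2^m} with no monochromatic triangle whose set system of monochromatic neighborhoods has dual VC-dimension at most 2. -/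
open Finset

variable {α : Type*}

/-- The neighborhood of `v` in color `i` with respect to the edge-coloring `χ` of `K_n`. -/
def monoNbhd {n m : ℕ} (χ : Fin n → Fin n → Fin m) (i : Fin m) (v : Fin n) :
    Finset (Fin n) :=
  Finset.univ.filter (fun u => u ≠ v ∧ χ u v = i)

/-- The set system `F = {N_{q_i}(v) : i ∈ [m], v ∈ V}` of all monochromatic
neighborhoods of the coloring `χ`. -/
def colorSystem {n m : ℕ} (χ : Fin n → Fin n → Fin m) : Finset (Finset (Fin n)) :=
  Finset.univ.image (fun p : Fin m × Fin n => monoNbhd χ p.1 p.2)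

/-- The coloring `χ` contains a monochromatic clique of size `k` in color `i`. -/
def HasMonoClique {n m : ℕ} (χ : Fin n → Fin n → Fin m) (i : Fin m) (k : ℕ) : Prop :=
  ∃ S : Finset (Fin n), S.card = k ∧ ∀ u ∈ S, ∀ v ∈ S, u ≠ v → χ u v = i

/-! ### Auxiliary lemmas -/

private lemma div_pow_eq_one_iff (x i : ℕ) : x / 2^i = 1 ↔ 2^i ≤ x ∧ x < 2^(i+1) := by
  have h : (0:ℕ) < 2^i := by positivity
  have hp : (2:ℕ)^(i+1) = 2^i * 2 := pow_succ 2 i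
  constructor
  · intro he
    have l1 : 1 ≤ x / 2^i := he.ge
    have l2 : x / 2^i < 2 := by omega
    have := (Nat.le_div_iff_mul_le h).mp l1
    have := (Nat.div_lt_iff_lt_mul h).mp l2
    omega
  · rintro ⟨h1, h2⟩
    have l1 : 1 ≤ x / 2^i := (Nat.one_le_div_iff h).mpr h1
    have l2 : x / 2^i < 2 := (Nat.div_lt_iff_lt_mul h).mpr (by omega)
    omega

private lemma xor_div_pow (a b i : ℕ) : (a ^^^ b) / 2^i = (a / 2^i) ^^^ (b / 2^i) := by
  rw [← Nat.shiftRight_eq_div_pow, ← Nat.shiftRight_eq_div_pow, ← Nat.shiftRight_eq_div_pow]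
  apply Nat.eq_of_testBit_eq; intro j; simp [Nat.testBit_shiftRight]

private lemma xor_one_ne (x : ℕ) : x ^^^ 1 ≠ x := by
  intro h
  have := congrArg (fun y => y ^^^ x) h
  simp only [Nat.xor_comm _ x, xor_cancel_left, Nat.xor_self] at this
  exact one_ne_zero this

private lemma log2_eq_iff (x i : ℕ) (hx : x ≠ 0) :
    Nat.log2 x = i ↔ (2^i ≤ x ∧ x < 2^(i+1)) := by
  rw [Nat.log2_eq_log_two]
  constructor
  · rintro rfl
    exact ⟨Nat.pow_log_le_self 2 hx, Nat.lt_pow_succ_log_self one_lt_two x⟩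
  · rintro ⟨h1, h2⟩
    exact Nat.log_eq_of_pow_le_of_lt_pow h1 h2

/-- The coloring assigning to `u ≠ v` the position of the most significant bit where
they differ. This realizes the recursive two-block construction. -/
def bitColor (m : ℕ) (hm : 1 ≤ m) (u v : Fin (2^m)) : Fin m :=
  if h : u.val ^^^ v.val = 0 then ⟨0, hm⟩
  else ⟨Nat.log2 (u.val ^^^ v.val), by
    have hlt : u.val ^^^ v.val < 2^m := Nat.xor_lt_two_pow u.isLt v.isLt
    rw [Nat.log2_eq_log_two]
    exact Nat.log_lt_of_lt_pow h hlt⟩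

lemma bitColor_symm (m : ℕ) (hm : 1 ≤ m) (u v : Fin (2^m)) :
    bitColor m hm u v = bitColor m hm v u := by
  simp [bitColor, Nat.xor_comm]

lemma bitColor_eq_iff (m : ℕ) (hm : 1 ≤ m) (u v : Fin (2^m)) (i : Fin m) :
    (u ≠ v ∧ bitColor m hm u v = i) ↔ u.val / 2^(i:ℕ) = (v.val / 2^(i:ℕ)) ^^^ 1 := by
  constructor
  · rintro ⟨hne, hc⟩
    have hx : u.val ^^^ v.val ≠ 0 := by
      intro h
      exact hne (Fin.ext (xor_eq_zero_iff.mp h))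
    rw [bitColor, dif_neg hx] at hc
    have hlog : Nat.log2 (u.val ^^^ v.val) = (i:ℕ) := congrArg Fin.val hc
    have := (log2_eq_iff _ _ hx).mp hlog
    have h1 : (u.val ^^^ v.val) / 2^(i:ℕ) = 1 := (div_pow_eq_one_iff _ _).mpr this
    rw [xor_div_pow] at h1
    rw [← h1, Nat.xor_comm (u.val / 2^(i:ℕ)), xor_cancel_left]
  · intro h
    have h1 : (u.val ^^^ v.val) / 2^(i:ℕ) = 1 := by
      rw [xor_div_pow, h, Nat.xor_comm, xor_cancel_left]
    have hx : u.val ^^^ v.val ≠ 0 := by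
      intro h0; rw [h0] at h1; simp at h1
    have hne : u ≠ v := by
      intro h0; rw [h0, Nat.xor_self] at hx; exact hx rfl
    refine ⟨hne, ?_⟩
    rw [bitColor, dif_neg hx]
    exact Fin.ext ((log2_eq_iff _ _ hx).mpr ((div_pow_eq_one_iff _ _).mp h1))

lemma mem_monoNbhd_iff (m : ℕ) (hm : 1 ≤ m) (i : Fin m) (v u : Fin (2^m)) :
    u ∈ monoNbhd (bitColor m hm) i v ↔ u.val / 2^(i:ℕ) = (v.val / 2^(i:ℕ)) ^^^ 1 := by
  rw [monoNbhd, mem_filter]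
  simp only [mem_univ, true_and]
  exact bitColor_eq_iff m hm u v i

/-- Monochromatic neighborhoods are dyadic blocks; two blocks sharing a point and
with ordered levels are nested. -/
lemma monoNbhd_subset (m : ℕ) (hm : 1 ≤ m) (i j : Fin m) (v w x : Fin (2^m))
    (hij : (i:ℕ) ≤ (j:ℕ))
    (hx1 : x ∈ monoNbhd (bitColor m hm) i v) (hx2 : x ∈ monoNbhd (bitColor m hm) j w) :
    monoNbhd (bitColor m hm) i v ⊆ monoNbhd (bitColor m hm) j w := by
  rw [mem_monoNbhd_iff] at hx1 hx2
  intro u hu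
  rw [mem_monoNbhd_iff] at hu ⊢
  have hpow : (2:ℕ)^(i:ℕ) * 2^((j:ℕ)-(i:ℕ)) = 2^(j:ℕ) := by
    rw [← pow_add]; congr 1; omega
  calc u.val / 2^(j:ℕ) = (u.val / 2^(i:ℕ)) / 2^((j:ℕ)-(i:ℕ)) := by
        rw [Nat.div_div_eq_div_mul, hpow]
    _ = (x.val / 2^(i:ℕ)) / 2^((j:ℕ)-(i:ℕ)) := by rw [hu, ← hx1]
    _ = x.val / 2^(j:ℕ) := by rw [Nat.div_div_eq_div_mul, hpow]
    _ = (w.val / 2^(j:ℕ)) ^^^ 1 := hx2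

lemma monoNbhd_nested (m : ℕ) (hm : 1 ≤ m) (i j : Fin m) (v w x : Fin (2^m))
    (hx1 : x ∈ monoNbhd (bitColor m hm) i v) (hx2 : x ∈ monoNbhd (bitColor m hm) j w) :
    monoNbhd (bitColor m hm) i v ⊆ monoNbhd (bitColor m hm) j w ∨
    monoNbhd (bitColor m hm) j w ⊆ monoNbhd (bitColor m hm) i v := by
  rcases le_total (i:ℕ) (j:ℕ) with h | h
  · exact Or.inl (monoNbhd_subset m hm i j v w x h hx1 hx2)
  · exact Or.inr (monoNbhd_subset m hm j i w v x h hx2 hx1)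

/-- No monochromatic triangle in the bit coloring. -/
lemma bitColor_no_triangle (m : ℕ) (hm : 1 ≤ m) :
    ¬ ∃ i : Fin m, HasMonoClique (bitColor m hm) i 3 := by
  rintro ⟨i, S, hcard, hcl⟩
  obtain ⟨a, b, c, hab, hac, hbc, rfl⟩ := Finset.card_eq_three.mp hcard
  have ha : a ∈ ({a, b, c} : Finset (Fin (2^m))) := by simp
  have hb : b ∈ ({a, b, c} : Finset (Fin (2^m))) := by simp
  have hc : c ∈ ({a, b, c} : Finset (Fin (2^m))) := by simp
  have h1 := (bitColor_eq_iff m hm a b i).mp ⟨hab, hcl a ha b hb hab⟩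
  have h2 := (bitColor_eq_iff m hm b c i).mp ⟨hbc, hcl b hb c hc hbc⟩
  have h3 := (bitColor_eq_iff m hm a c i).mp ⟨hac, hcl a ha c hc hac⟩
  rw [h2] at h1
  rw [Nat.xor_assoc, Nat.xor_self, Nat.xor_zero] at h1
  rw [h1] at h3
  exact xor_one_ne _ h3.symm

/-- The dual VC dimension of the neighborhood system of the bit coloring is at most `d`
for any `d ≥ 1`. -/
lemma bitColor_dualVC (m : ℕ) (hm : 1 ≤ m) (d : ℕ) (hd : 1 ≤ d) :
    DualVCDimLE (colorSystem (bitColor m hm)) d := by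
  intro S hS
  by_contra hcard
  push_neg at hcard
  have h2 : 1 < S.card := lt_of_le_of_lt hd hcard
  obtain ⟨X, hX, Y, hY, hXY⟩ := Finset.one_lt_card.mp h2
  -- common point: from the pattern B = S
  obtain ⟨A, hA, hAS⟩ := hS S (Finset.Subset.refl S)
  rw [dualSystem] at hA
  obtain ⟨w, -, rfl⟩ := Finset.mem_image.mp hA
  have hSsub : S ⊆ (colorSystem (bitColor m hm)).filter (fun A => w ∈ A) := by
    rw [← hAS]; exact Finset.inter_subset_left
  have hXf := Finset.mem_filter.mp (hSsub hX)
  have hYf := Finset.mem_filter.mp (hSsub hY)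
  have hXc := hXf.1
  have hYc := hYf.1
  rw [colorSystem] at hXc hYc
  obtain ⟨⟨i, v⟩, -, hXe⟩ := Finset.mem_image.mp hXc
  obtain ⟨⟨j, v'⟩, -, hYe⟩ := Finset.mem_image.mp hYc
  -- X and Y are nested
  have hwX : w ∈ X := hXf.2
  have hwY : w ∈ Y := hYf.2
  have hnest : X ⊆ Y ∨ Y ⊆ X := by
    subst hXe hYe
    exact monoNbhd_nested m hm i j v v' w hwX hwY
  -- a strictly smaller set in S cannot be separated
  have key : ∀ P Q : Finset (Fin (2^m)), P ∈ S → Q ∈ S → P ≠ Q → P ⊆ Q → False := by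
    intro P Q hP hQ hPQ hsub
    obtain ⟨A', hA', hA'S⟩ := hS {P} (Finset.singleton_subset_iff.mpr hP)
    rw [dualSystem] at hA'
    obtain ⟨w', -, rfl⟩ := Finset.mem_image.mp hA'
    have hPin : P ∈ (colorSystem (bitColor m hm)).filter (fun A => w' ∈ A) ∩ S := by
      rw [hA'S]; exact Finset.mem_singleton_self P
    have hw'P : w' ∈ P := (Finset.mem_filter.mp (Finset.mem_inter.mp hPin).1).2
    have hQ' : Q ∈ (colorSystem (bitColor m hm)).filter (fun A => w' ∈ A) ∩ S := by
      refine Finset.mem_inter.mpr ⟨Finset.mem_filter.mpr ⟨?_, hsub hw'P⟩, hQ⟩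
      have := hSsub hQ
      exact (Finset.mem_filter.mp this).1
    rw [hA'S, Finset.mem_singleton] at hQ'
    exact hPQ hQ'.symm
  rcases hnest with h | h
  · exact key X Y hX hY hXY h
  · exact key Y X hY hX hXY.symm h

/-- For every `d ≥ 2` and `m ≥ 1`, `r_d(3;m) ≥ 2^m + 1`: there is an `m`-coloring of the
edges of the complete graph on `2^m` vertices with no monochromatic triangle whose set
system of monochromatic neighborhoods has dual VC-dimension at most `2` (hence at most
`d`). -/
theorem ramsey_lower_bound_dual_vc (d m : ℕ) (hd : 2 ≤ d) (hm : 1 ≤ m) :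
    ∃ χ : Fin (2 ^ m) → Fin (2 ^ m) → Fin m,
      (∀ u v, χ u v = χ v u) ∧
      (¬ ∃ i : Fin m, HasMonoClique χ i 3) ∧
      DualVCDimLE (colorSystem χ) 2 ∧
      DualVCDimLE (colorSystem χ) d := by
  exact ⟨bitColor m hm, bitColor_symm m hm, bitColor_no_triangle m hm,
    bitColor_dualVC m hm 2 (by omega), bitColor_dualVC m hm d (by omega)⟩
end

section
/- (Erdős–Hajnal for hereditary families, weak form used) There is a constant ε > 0 depending only on d such that every graph on n vertices with VC-dimension at most d contains a clique or an independent set of size at least e^{ε√(log n)}. -/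
/-- A finset `S` is shattered by the set system `F`. -/
def ShattersSet {α : Type*} (F : Set (Set α)) (S : Finset α) : Prop :=
  ∀ B ⊆ S, ∃ A ∈ F, A ∩ (S : Set α) = (B : Set α)

/-- The set system `F` has VC-dimension at most `d`. -/
def VCDimSetLE {α : Type*} (F : Set (Set α)) (d : ℕ) : Prop :=
  ∀ S : Finset α, ShattersSet F S → S.card ≤ d

open Finset

namespace EHVC


/-- number of vertices of the forbidden pattern -/
def kk (d : ℕ) : ℕ := (d+1) + 2^(d+1)

noncomputable def Ck (d : ℕ) : ℝ := Real.log (8 * (kk d)^2) + (kk d) * Real.log 4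

noncomputable def eps (d : ℕ) : ℝ :=
  min (Real.sqrt (Real.log 2 / (8 * (kk d)))) (Real.log 2 / (2 * Real.sqrt (Ck d)))

noncomputable def tt (d n : ℕ) : ℝ := Real.exp (eps d * Real.sqrt (Real.log n))

noncomputable def th (d n : ℕ) : ℝ := 1 / (4 * (tt d n)^2)

noncomputable def bet (d n : ℕ) : ℝ := (th d n)^(kk d) / (4 * (kk d)^2)

noncomputable def N0 (d n : ℕ) : ℝ := 2 / bet d n

noncomputable def del (d n : ℕ) : ℝ := Real.log 2 / Real.log (N0 d n)

variable (d n : ℕ)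

lemma kk_ge : 3 ≤ kk d := by
  have : 2 ≤ 2^(d+1) := by
    calc 2 = 2^1 := rfl
    _ ≤ 2^(d+1) := Nat.pow_le_pow_right (by norm_num) (by omega)
  unfold kk; omega

lemma kk_pos : 0 < kk d := by have := kk_ge d; omega

lemma Ck_pos : 0 < Ck d := by
  have h1 : (0:ℝ) < Real.log (8 * (kk d)^2) := by
    apply Real.log_pos
    have : (1:ℝ) ≤ (kk d : ℝ) := by exact_mod_cast (kk_pos d)
    nlinarith
  have h2 : (0:ℝ) ≤ (kk d) * Real.log 4 := by
    apply mul_nonneg (by positivity)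
    exact Real.log_nonneg (by norm_num)
  unfold Ck; linarith

lemma eps_pos : 0 < eps d := by
  apply lt_min
  · apply Real.sqrt_pos.mpr
    apply div_pos (Real.log_pos (by norm_num))
    have : (0:ℝ) < (kk d : ℝ) := by exact_mod_cast kk_pos d
    linarith
  · apply div_pos (Real.log_pos (by norm_num))
    have := Ck_pos d
    positivity

lemma eps_sq_le : (eps d)^2 ≤ Real.log 2 / (8 * (kk d)) := by
  have h1 : eps d ≤ Real.sqrt (Real.log 2 / (8 * (kk d))) := min_le_left _ _
  have h0 : 0 ≤ eps d := (eps_pos d).le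
  calc (eps d)^2 ≤ (Real.sqrt (Real.log 2 / (8 * (kk d))))^2 := by
        apply pow_le_pow_left₀ h0 h1
  _ = Real.log 2 / (8 * (kk d)) := Real.sq_sqrt (by
        apply div_nonneg (Real.log_nonneg (by norm_num))
        positivity)

lemma eps_le_Ck : (eps d)^2 * Ck d ≤ (Real.log 2)^2 / 4 := by
  have h1 : eps d ≤ Real.log 2 / (2 * Real.sqrt (Ck d)) := min_le_right _ _
  have h0 : 0 ≤ eps d := (eps_pos d).le
  have hC := Ck_pos d
  have hs : 0 < Real.sqrt (Ck d) := Real.sqrt_pos.mpr hC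
  have h2 : (eps d)^2 ≤ (Real.log 2 / (2 * Real.sqrt (Ck d)))^2 := pow_le_pow_left₀ h0 h1 2
  have h3 : (Real.log 2 / (2 * Real.sqrt (Ck d)))^2 = (Real.log 2)^2 / (4 * Ck d) := by
    rw [div_pow]
    congr 1
    rw [mul_pow]
    rw [Real.sq_sqrt hC.le]
    norm_num
  rw [h3] at h2
  calc (eps d)^2 * Ck d ≤ (Real.log 2)^2 / (4 * Ck d) * Ck d := by
        apply mul_le_mul_of_nonneg_right h2 hC.le
  _ = (Real.log 2)^2 / 4 := by field_simp

lemma tt_ge_one : 1 ≤ tt d n := by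
  unfold tt
  rw [show (1:ℝ) = Real.exp 0 by simp]
  apply Real.exp_le_exp.mpr
  have := (eps_pos d).le
  positivity

lemma tt_pos : 0 < tt d n := lt_of_lt_of_le one_pos (tt_ge_one d n)

lemma th_pos : 0 < th d n := by
  unfold th
  have := tt_pos d n
  positivity

lemma th_le : th d n ≤ 1/4 := by
  unfold th
  have h := tt_ge_one d n
  have h2 : 1 ≤ (tt d n)^2 := by nlinarith
  rw [div_le_div_iff₀ (by nlinarith) (by norm_num)]
  nlinarith

lemma th_mul (d n : ℕ) : th d n * (4*(tt d n)^2) = 1 := by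
  have h := tt_pos d n
  unfold th
  field_simp

lemma bet_pos : 0 < bet d n := by
  unfold bet
  have := th_pos d n
  have := kk_pos d
  have : (0:ℝ) < (kk d:ℝ) := by exact_mod_cast this
  positivity

lemma bet_le_half : bet d n ≤ 1/2 := by
  unfold bet
  have hth := th_pos d n
  have hthle := th_le d n
  have hk := kk_ge d
  have hkR : (3:ℝ) ≤ (kk d : ℝ) := by exact_mod_cast hk
  have h1 : (th d n)^(kk d) ≤ 1 := by
    apply pow_le_one₀ hth.le (by linarith)
  have h2 : (4:ℝ) * (kk d)^2 ≥ 36 := by nlinarith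
  rw [div_le_div_iff₀ (by nlinarith) (by norm_num)]
  nlinarith

lemma N0_gt_two : 2 < N0 d n := by
  unfold N0
  have hb := bet_pos d n
  have hb2 := bet_le_half d n
  rw [lt_div_iff₀ hb]
  nlinarith

lemma log_N0_pos : 0 < Real.log (N0 d n) := Real.log_pos (by linarith [N0_gt_two d n])

lemma del_pos : 0 < del d n := div_pos (Real.log_pos (by norm_num)) (log_N0_pos d n)

lemma N0_rpow_del : (N0 d n) ^ (del d n) = 2 := by
  have h2 := N0_gt_two d n
  rw [Real.rpow_def_of_pos (by linarith)]
  unfold del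
  rw [mul_div_cancel₀]
  · exact Real.exp_log (by norm_num)
  · exact (log_N0_pos d n).ne'

lemma half_rpow_del : (bet d n / 2) ^ (del d n) = 1/2 := by
  have hb := bet_pos d n
  have : bet d n / 2 = (N0 d n)⁻¹ := by
    unfold N0; field_simp
  rw [this, Real.inv_rpow (by unfold N0; positivity), N0_rpow_del]
  norm_num


lemma N0_ge_k2 (d n : ℕ) : 8*((kk d:ℝ))^2 ≤ N0 d n := by
  have hth := th_pos d n
  have hthle := th_le d n
  have hk : (3:ℝ) ≤ (kk d:ℝ) := by exact_mod_cast kk_ge d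
  have hpow : (0:ℝ) < (th d n)^(kk d) := pow_pos hth _
  have hpow1 : (th d n)^(kk d) ≤ 1 := pow_le_one₀ hth.le (by linarith)
  have : N0 d n = 8*((kk d:ℝ))^2 / (th d n)^(kk d) := by
    unfold N0 bet; field_simp; ring
  rw [this, le_div_iff₀ hpow]
  nlinarith
lemma bet_N0 (d n : ℕ) : bet d n * N0 d n = 2 := by
  have hb := bet_pos d n
  unfold N0; field_simp


abbrev Idx (d : ℕ) := Fin (d+1) ⊕ Finset (Fin (d+1))

def pat (d : ℕ) : Idx d → Idx d → Prop
  | .inl s, .inr B => s ∈ B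
  | .inr B, .inl s => s ∈ B
  | _, _ => False

lemma pat_comm (d : ℕ) (a b : Idx d) : pat d a b ↔ pat d b a := by
  cases a <;> cases b <;> simp [pat]

lemma card_Idx (d : ℕ) : Fintype.card (Idx d) = (d+1) + 2^(d+1) := by
  simp [Idx]

lemma no_embedding {n d : ℕ} (G : SimpleGraph (Fin n))
    (hvc : VCDimSetLE (Set.range G.neighborSet) d)
    (x : Idx d → Fin n) (hinj : Function.Injective x)
    (hadj : ∀ a b, a ≠ b → (G.Adj (x a) (x b) ↔ pat d a b)) : False := by
  classical
  set S : Finset (Fin n) := (Finset.univ : Finset (Fin (d+1))).image (fun s => x (.inl s)) with hS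
  have hinj' : Function.Injective (fun s : Fin (d+1) => x (.inl s)) := by
    intro a b hab
    have := hinj hab
    exact Sum.inl.injEq .. ▸ (by injection this)
  have hcard : S.card = d + 1 := by
    rw [hS, Finset.card_image_of_injective _ hinj', Finset.card_univ, Fintype.card_fin]
  have hshat : ShattersSet (Set.range G.neighborSet) S := by
    intro B hB
    set B0 : Finset (Fin (d+1)) := Finset.univ.filter (fun s => x (.inl s) ∈ B) with hB0
    have key : ∀ s : Fin (d+1), (G.Adj (x (.inr B0)) (x (.inl s)) ↔ s ∈ B0) := by
      intro s
      have hne : (Sum.inr B0 : Idx d) ≠ .inl s := by simp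
      rw [hadj _ _ hne]; simp [pat]
    have memS : ∀ u, u ∈ S → ∃ s, x (.inl s) = u := by
      intro u hu
      rw [hS, Finset.mem_image] at hu
      obtain ⟨s, -, hsu⟩ := hu
      exact ⟨s, hsu⟩
    refine ⟨G.neighborSet (x (.inr B0)), ⟨_, rfl⟩, ?_⟩
    ext u
    rw [Set.mem_inter_iff, SimpleGraph.mem_neighborSet, Finset.mem_coe, Finset.mem_coe]
    constructor
    · rintro ⟨hadju, hu⟩
      obtain ⟨s, hsu⟩ := memS u hu
      subst hsu
      have hs : s ∈ B0 := (key s).mp hadju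
      rw [hB0, Finset.mem_filter] at hs
      exact hs.2
    · intro hu
      obtain ⟨s, hsu⟩ := memS u (hB hu)
      subst hsu
      refine ⟨(key s).mpr ?_, hB hu⟩
      rw [hB0, Finset.mem_filter]
      exact ⟨Finset.mem_univ s, hu⟩
  have := hvc S hshat
  omega

/-- split a finset into `j` pairwise disjoint parts of size `c` each -/
lemma exists_parts {α : Type*} [DecidableEq α] (c : ℕ) :
    ∀ (j : ℕ) (s : Finset α), j * c ≤ s.card →
    ∃ P : Fin j → Finset α, (∀ i, P i ⊆ s) ∧
      (∀ i i', i ≠ i' → Disjoint (P i) (P i')) ∧ (∀ i, (P i).card = c) := by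
  intro j
  induction j with
  | zero => intro s _; exact ⟨Fin.elim0, fun i => i.elim0, fun i => i.elim0, fun i => i.elim0⟩
  | succ j ih =>
    intro s hs
    have hc : c ≤ s.card := le_trans (by nlinarith [Nat.le_refl c]) hs
    obtain ⟨T, hTs, hTc⟩ := s.exists_subset_card_eq hc
    have hrest : j * c ≤ (s \ T).card := by
      rw [Finset.card_sdiff_of_subset hTs, hTc]
      have : (j+1) * c = j * c + c := by ring
      omega
    obtain ⟨P', hP1, hP2, hP3⟩ := ih (s \ T) hrest
    refine ⟨Fin.cons T P', ?_, ?_, ?_⟩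
    · intro i
      refine Fin.cases ?_ ?_ i
      · simpa using hTs
      · intro i'
        simpa using (hP1 i').trans (Finset.sdiff_subset)
    · intro i i' hne
      rcases Fin.eq_zero_or_eq_succ i with rfl | ⟨a, rfl⟩ <;>
        rcases Fin.eq_zero_or_eq_succ i' with rfl | ⟨b, rfl⟩
      · exact absurd rfl hne
      · simp only [Fin.cons_zero, Fin.cons_succ]
        exact Finset.disjoint_of_subset_right (hP1 b) Finset.disjoint_sdiff
      · simp only [Fin.cons_zero, Fin.cons_succ]
        exact Finset.disjoint_of_subset_left (hP1 a) Finset.sdiff_disjoint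
      · simp only [Fin.cons_succ]
        exact hP2 a b (by rintro rfl; exact hne rfl)
    · intro i
      refine Fin.cases ?_ ?_ i
      · simpa using hTc
      · intro a; simpa using hP3 a


noncomputable def eqv (d : ℕ) : Idx d ≃ Fin (kk d) :=
  Fintype.equivFinOfCardEq (by rw [card_Idx]; rfl)

noncomputable def eta (d : ℕ) (a b : Fin (kk d)) : Prop :=
  pat d ((eqv d).symm a) ((eqv d).symm b)

lemma eta_comm (d : ℕ) (a b : Fin (kk d)) : eta d a b ↔ eta d b a := pat_comm d _ _

open scoped Classical in
lemma pair_lemma {n d : ℕ} (G : SimpleGraph (Fin n))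
    (hvc : VCDimSetLE (Set.range G.neighborSet) d)
    (W : Finset (Fin n)) (hW : N0 d n ≤ (W.card : ℝ)) :
    ∃ A B : Finset (Fin n), A ⊆ W ∧ B ⊆ W ∧ Disjoint A B ∧
      bet d n * W.card ≤ (A.card:ℝ) ∧ bet d n * W.card ≤ (B.card:ℝ) ∧
      ((∀ x ∈ A, ((B.filter (fun y => G.Adj x y)).card : ℝ) < th d n * B.card) ∨
       (∀ x ∈ A, ((B.filter (fun y => ¬ G.Adj x y)).card : ℝ) < th d n * B.card)) := by
  classical
  by_contra hcon
  set k := kk d with hk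
  set m := W.card with hm
  set c0 := m / k with hc0
  -- numeric facts
  have hkpos : 0 < k := kk_pos d
  have hk3 : (3:ℝ) ≤ (k:ℝ) := by exact_mod_cast kk_ge d
  have hthpos := th_pos d n
  have hthle := th_le d n
  have hbpos := bet_pos d n
  have hN0k := N0_ge_k2 d n
  have hmR : (0:ℝ) < (m:ℝ) := lt_of_lt_of_le (by nlinarith [N0_gt_two d n]) hW
  have hm2k : 2*(k:ℝ) ≤ (m:ℝ) := le_trans (by nlinarith) (le_trans hN0k hW)
  have hc0R : (m:ℝ)/(2*(k:ℝ)) ≤ (c0:ℝ) := by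
    have hdm : (k:ℝ)*(c0:ℝ) + ((m % k : ℕ):ℝ) = (m:ℝ) := by
      exact_mod_cast Nat.div_add_mod m k
    have hmod : ((m % k : ℕ):ℝ) < (k:ℝ) := by exact_mod_cast Nat.mod_lt m hkpos
    rw [div_le_iff₀ (by linarith)]
    nlinarith
  have hbm2 : (2:ℝ) ≤ bet d n * m := by
    have hb2 := bet_N0 d n
    nlinarith [mul_le_mul_of_nonneg_left hW hbpos.le]
  have hbetval : bet d n = (th d n)^k / (4*(k:ℝ)^2) := by
    unfold bet; rw [hk]
  have hchain : 2*(k:ℝ)*(bet d n * m) ≤ (th d n)^k * (c0:ℝ) := by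
    have h1 : (th d n)^k * ((m:ℝ)/(2*(k:ℝ))) ≤ (th d n)^k * (c0:ℝ) := by
      apply mul_le_mul_of_nonneg_left hc0R (by positivity)
    refine le_trans (le_of_eq ?_) h1
    rw [hbetval]; field_simp; ring
  -- parts
  have hparts_le : k * c0 ≤ m := by rw [hc0, mul_comm]; exact Nat.div_mul_le_self m k
  obtain ⟨P, hPsub, hPdisj, hPcard⟩ := exists_parts c0 k W hparts_le
  have hc0pos : (0:ℝ) < (c0:ℝ) := by
    have hq : (0:ℝ) < (m:ℝ)/(2*(k:ℝ)) := div_pos hmR (by linarith)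
    linarith
  have hmpos : 0 < m := by exact_mod_cast hmR
  obtain ⟨w0, hw0⟩ : W.Nonempty := Finset.card_pos.mp hmpos
  -- the invariant
  have inv : ∀ i : ℕ, i ≤ k →
      ∃ (x : Fin k → Fin n) (C : Fin k → Finset (Fin n)),
        (∀ j, C j ⊆ P j) ∧
        (∀ j : Fin k, i ≤ (j:ℕ) → (th d n)^i * (c0:ℝ) ≤ ((C j).card:ℝ)) ∧
        (∀ j : Fin k, (j:ℕ) < i → x j ∈ P j) ∧
        (∀ j j' : Fin k, (j:ℕ) < i → (j:ℕ) < (j':ℕ) →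
          (((j':ℕ) < i → (G.Adj (x j) (x j') ↔ eta d j j')) ∧
           (i ≤ (j':ℕ) → ∀ v ∈ C j', (G.Adj (x j) v ↔ eta d j j')))) := by
    intro i
    induction i with
    | zero =>
      intro _
      refine ⟨fun _ => w0, P, fun j => le_refl _, ?_, ?_, ?_⟩
      · intro j _
        rw [pow_zero, one_mul, hPcard j]
      · intro j hj; omega
      · intro j j' hj _; omega
    | succ i ih =>
      intro hik
      obtain ⟨x, C, h1, h2, h3, h4⟩ := ih (by omega)
      have hik' : i < k := by omega
      set i' : Fin k := ⟨i, hik'⟩ with hi'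
      have hi'v : (i':ℕ) = i := rfl
      have hCge : ∀ j : Fin k, i ≤ (j:ℕ) → 2*(k:ℝ)*(bet d n * m) ≤ ((C j).card:ℝ) := by
        intro j hj
        refine le_trans hchain (le_trans ?_ (h2 j hj))
        apply mul_le_mul_of_nonneg_right _ hc0pos.le
        exact pow_le_pow_of_le_one hthpos.le (le_trans hthle (by norm_num)) (by omega)
      have hCbm : ∀ j : Fin k, i ≤ (j:ℕ) → bet d n * m ≤ ((C j).card:ℝ) := by
        intro j hj
        refine le_trans ?_ (hCge j hj)
        nlinarith
      -- bad sets are small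
      set Bad : Fin k → Finset (Fin n) := fun j =>
        (C i').filter (fun v =>
          (((C j).filter (fun u => (G.Adj v u ↔ eta d i' j))).card:ℝ) < th d n * ((C j).card)) with hBad
      have hbadsmall : ∀ j : Fin k, i < (j:ℕ) → ((Bad j).card : ℝ) < bet d n * m := by
        intro j hj
        by_contra hge
        push_neg at hge
        apply hcon
        have hij' : i' ≠ j := by
          intro h; rw [← h, hi'v] at hj; omega
        refine ⟨Bad j, C j, ?_, ?_, ?_, hge, hCbm j (by omega), ?_⟩
        · rw [hBad]
          exact (Finset.filter_subset _ _).trans ((h1 i').trans (hPsub i'))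
        · exact (h1 j).trans (hPsub j)
        · rw [hBad]
          exact Finset.disjoint_of_subset_left (Finset.filter_subset _ _)
            (Finset.disjoint_of_subset_left (h1 i')
              (Finset.disjoint_of_subset_right (h1 j) (hPdisj i' j hij')))
        · by_cases hη : eta d i' j
          · left
            intro v hv
            rw [hBad] at hv
            have hv2 := (Finset.mem_filter.mp hv).2
            have heq : (C j).filter (fun u => G.Adj v u)
                = (C j).filter (fun u => (G.Adj v u ↔ eta d i' j)) := by
              apply Finset.filter_congr
              intro u _
              simp [hη]
            rw [heq]
            exact hv2
          · right
            intro v hv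
            rw [hBad] at hv
            have hv2 := (Finset.mem_filter.mp hv).2
            have heq : (C j).filter (fun u => ¬ G.Adj v u)
                = (C j).filter (fun u => (G.Adj v u ↔ eta d i' j)) := by
              apply Finset.filter_congr
              intro u _
              simp [hη]
            rw [heq]
            exact hv2
      -- good vertices
      set Gd : Finset (Fin n) := (C i').filter (fun v => ∀ j : Fin k, i < (j:ℕ) →
          th d n * ((C j).card) ≤ (((C j).filter (fun u => (G.Adj v u ↔ eta d i' j))).card:ℝ)) with hGd
      have hGdcard : (0:ℝ) < (Gd.card:ℝ) := by
        have hsub : C i' ⊆ Gd ∪ (Finset.univ.filter (fun j : Fin k => i < (j:ℕ))).biUnion Bad := by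
          intro v hv
          rw [Finset.mem_union]
          by_cases hvb : v ∈ (Finset.univ.filter (fun j : Fin k => i < (j:ℕ))).biUnion Bad
          · exact Or.inr hvb
          · left
            rw [hGd, Finset.mem_filter]
            refine ⟨hv, ?_⟩
            intro j hj
            by_contra hlt
            push_neg at hlt
            apply hvb
            rw [Finset.mem_biUnion]
            refine ⟨j, Finset.mem_filter.mpr ⟨Finset.mem_univ j, hj⟩, ?_⟩
            rw [hBad]
            exact Finset.mem_filter.mpr ⟨hv, hlt⟩
        have hcard1 : ((C i').card:ℝ) ≤ (Gd.card:ℝ) +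
            ∑ j ∈ Finset.univ.filter (fun j : Fin k => i < (j:ℕ)), ((Bad j).card:ℝ) := by
          have h5 := Finset.card_le_card hsub
          have h6 := Finset.card_union_le Gd ((Finset.univ.filter (fun j : Fin k => i < (j:ℕ))).biUnion Bad)
          have h7 := Finset.card_biUnion_le (s := Finset.univ.filter (fun j : Fin k => i < (j:ℕ))) (t := Bad)
          have : (C i').card ≤ Gd.card + ∑ j ∈ Finset.univ.filter (fun j : Fin k => i < (j:ℕ)), (Bad j).card := by
            omega
          exact_mod_cast this
        have hsum : ∑ j ∈ Finset.univ.filter (fun j : Fin k => i < (j:ℕ)), ((Bad j).card:ℝ)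
            ≤ (k:ℝ) * (bet d n * m) := by
          refine le_trans (Finset.sum_le_sum (fun j hj => (hbadsmall j (Finset.mem_filter.mp hj).2).le)) ?_
          rw [Finset.sum_const]
          have hcf : (Finset.univ.filter (fun j : Fin k => i < (j:ℕ))).card ≤ k := by
            refine le_trans (Finset.card_filter_le _ _) ?_
            simp
          have : ((Finset.univ.filter (fun j : Fin k => i < (j:ℕ))).card : ℝ) ≤ (k:ℝ) := by
            exact_mod_cast hcf
          rw [nsmul_eq_mul]
          nlinarith
        have hCi := hCge i' (le_refl i)
        nlinarith
      have hGdne : Gd.Nonempty := Finset.card_pos.mp (by exact_mod_cast hGdcard)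
      obtain ⟨xi, hxi⟩ := hGdne
      have hxi2 := hxi
      rw [hGd, Finset.mem_filter] at hxi2
      have hxiC : xi ∈ C i' := hxi2.1
      have hxiGd : ∀ j : Fin k, i < (j:ℕ) →
          th d n * ((C j).card) ≤ (((C j).filter (fun u => (G.Adj xi u ↔ eta d i' j))).card:ℝ) :=
        hxi2.2
      -- update
      refine ⟨Function.update x i' xi,
        fun j => if i < (j:ℕ) then (C j).filter (fun u => (G.Adj xi u ↔ eta d i' j)) else C j,
        ?_, ?_, ?_, ?_⟩
      · intro j
        by_cases hj : i < (j:ℕ) <;> simp only [hj, if_true, if_false, reduceIte]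
        · exact (Finset.filter_subset _ _).trans (h1 j)
        · exact h1 j
      · intro j hj
        have hj' : i < (j:ℕ) := by omega
        simp only [hj', reduceIte]
        calc (th d n)^(i+1) * (c0:ℝ) = th d n * ((th d n)^i * (c0:ℝ)) := by ring
        _ ≤ th d n * ((C j).card:ℝ) := by
            apply mul_le_mul_of_nonneg_left (h2 j (by omega)) hthpos.le
        _ ≤ _ := hxiGd j hj'
      · intro j hj
        by_cases hji : (j:ℕ) < i
        · rw [Function.update_of_ne (by intro h; rw [h] at hji; simp [hi'] at hji)]
          exact h3 j hji
        · have : j = i' := by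
            apply Fin.ext; rw [hi'v]; omega
          rw [this, Function.update_self]
          exact (h1 i') hxiC
      · intro j j' hj hjj'
        have hxj : Function.update x i' xi j = if (j:ℕ) < i then x j else xi := by
          by_cases hji : (j:ℕ) < i
          · rw [Function.update_of_ne (by intro h; rw [h, hi'v] at hji; omega), if_pos hji]
          · have : j = i' := by apply Fin.ext; rw [hi'v]; omega
            rw [this, Function.update_self, if_neg (by omega)]
        constructor
        · intro hj'
          by_cases hji : (j:ℕ) < i
          · rw [hxj, if_pos hji]
            by_cases hj'i : (j':ℕ) < i
            · rw [Function.update_of_ne (by intro h; rw [h, hi'v] at hj'i; omega)]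
              exact ((h4 j j' hji hjj').1) hj'i
            · have hj'eq : j' = i' := by apply Fin.ext; rw [hi'v]; omega
              rw [hj'eq, Function.update_self]
              exact ((h4 j i' hji (by rw [hi'v]; omega)).2) (le_of_eq hi'v.symm) xi hxiC
          · -- j = i, but then j' > j means (j':ℕ) ≥ i+1, contradicting j' < i+1
            exfalso; omega
        · intro hj'
          have hj'i : i < (j':ℕ) := by omega
          simp only [hj'i, reduceIte]
          intro v hv
          have hvC : v ∈ C j' := (Finset.mem_filter.mp hv).1
          by_cases hji : (j:ℕ) < i
          · rw [hxj, if_pos hji]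
            exact ((h4 j j' hji hjj').2) (by omega) v hvC
          · rw [hxj, if_neg hji]
            have hjeq : j = i' := by apply Fin.ext; rw [hi'v]; omega
            rw [hjeq]
            exact (Finset.mem_filter.mp hv).2
  -- extract the embedding at i = k
  obtain ⟨x, C, h1, h2, h3, h4⟩ := inv k (le_refl k)
  have hx : ∀ j : Fin k, x j ∈ P j := fun j => h3 j j.isLt
  have hadjall : ∀ j j' : Fin k, (j:ℕ) < (j':ℕ) → (G.Adj (x j) (x j') ↔ eta d j j') :=
    fun j j' h => (h4 j j' j.isLt h).1 j'.isLt
  have hxinj : Function.Injective x := by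
    intro a b hab
    by_contra hne
    have hd := hPdisj a b hne
    exact (Finset.disjoint_left.mp hd (hx a)) (hab ▸ hx b)
  have hkk : k = kk d := hk
  refine no_embedding G hvc (fun a => x ((eqv d) a)) (hxinj.comp (eqv d).injective) ?_
  intro a b hab
  have hne : (eqv d) a ≠ (eqv d) b := fun h => hab ((eqv d).injective h)
  rcases lt_trichotomy (((eqv d) a : Fin k):ℕ) (((eqv d) b : Fin k):ℕ) with hlt | heq | hgt
  · rw [hadjall _ _ hlt]
    unfold eta
    simp
  · exact absurd (Fin.ext heq) hne
  · rw [G.adj_comm, hadjall _ _ hgt]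
    unfold eta
    simp only [Equiv.symm_apply_apply]
    exact pat_comm d b a

set_option maxHeartbeats 1000000 in
open scoped Classical in
lemma main_rec {n d : ℕ} (G : SimpleGraph (Fin n))
    (hvc : VCDimSetLE (Set.range G.neighborSet) d) :
    ∀ (M : ℕ) (W : Finset (Fin n)), W.card ≤ M →
    ∃ Sc Si : Finset (Fin n), Sc ⊆ W ∧ Si ⊆ W ∧ G.IsClique ↑Sc ∧
      (∀ u ∈ Si, ∀ v ∈ Si, u ≠ v → ¬ G.Adj u v) ∧
      min ((tt d n)^2) ((W.card:ℝ) ^ (del d n)) ≤ (Sc.card:ℝ) * (Si.card:ℝ) := by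
  classical
  have htt := tt_ge_one d n
  have httpos := tt_pos d n
  have hdel := del_pos d n
  have hbpos := bet_pos d n
  have hthpos := th_pos d n
  have hN02 := N0_gt_two d n
  have hbN0 := bet_N0 d n
  -- helper for empty/small outputs
  have hsmall_out : ∀ (W : Finset (Fin n)), (W.card:ℝ) ≤ N0 d n →
      ∃ Sc Si : Finset (Fin n), Sc ⊆ W ∧ Si ⊆ W ∧ G.IsClique ↑Sc ∧
      (∀ u ∈ Si, ∀ v ∈ Si, u ≠ v → ¬ G.Adj u v) ∧
      min ((tt d n)^2) ((W.card:ℝ) ^ (del d n)) ≤ (Sc.card:ℝ) * (Si.card:ℝ) := by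
    intro W hWN
    have hWrp : ((W.card:ℝ)) ^ (del d n) ≤ 2 := by
      calc ((W.card:ℝ)) ^ (del d n) ≤ (N0 d n) ^ (del d n) := by
            apply Real.rpow_le_rpow (by positivity) hWN hdel.le
      _ = 2 := N0_rpow_del d n
    rcases Nat.lt_or_ge W.card 2 with hc2 | hc2
    · rcases Nat.lt_or_ge W.card 1 with hc1 | hc1
      · -- empty
        have hW0 : W.card = 0 := by omega
        refine ⟨∅, ∅, Finset.empty_subset _, Finset.empty_subset _, ?_, ?_, ?_⟩
        · simp [SimpleGraph.IsClique]
        · intro u hu; simp at hu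
        · have : ((W.card:ℝ)) ^ (del d n) = 0 := by
            rw [hW0]; push_cast; exact Real.zero_rpow hdel.ne'
          calc min ((tt d n)^2) ((W.card:ℝ) ^ (del d n)) ≤ (W.card:ℝ) ^ (del d n) :=
                min_le_right _ _
          _ = 0 := this
          _ ≤ _ := by simp
      · -- singleton
        have hW1 : W.card = 1 := by omega
        obtain ⟨u, hu⟩ := Finset.card_eq_one.mp hW1
        refine ⟨{u}, {u}, by rw [hu], by rw [hu], ?_, ?_, ?_⟩
        · simp [SimpleGraph.IsClique, Set.Pairwise]
        · intro a ha b hb hne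
          simp only [Finset.mem_singleton] at ha hb
          exact absurd (ha.trans hb.symm) hne
        · have h1 : ((W.card:ℝ)) ^ (del d n) = 1 := by
            rw [hW1]; push_cast; exact Real.one_rpow _
          simp only [Finset.card_singleton]
          rw [h1]
          push_cast
          calc min ((tt d n)^2) (1:ℝ) ≤ 1 := min_le_right _ _
          _ ≤ _ := by norm_num
    · -- two vertices
      obtain ⟨u, hu, v, hv, huv⟩ := Finset.one_lt_card.mp (show 1 < W.card by omega)
      have hkey : min ((tt d n)^2) ((W.card:ℝ) ^ (del d n)) ≤ 2 :=
        le_trans (min_le_right _ _) hWrp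
      by_cases hadj : G.Adj u v
      · refine ⟨{u, v}, {u}, ?_, by simpa using hu, ?_, ?_, ?_⟩
        · intro a ha
          simp only [Finset.mem_insert, Finset.mem_singleton] at ha
          rcases ha with rfl | rfl
          · exact hu
          · exact hv
        · intro a ha b hb hne
          simp only [Finset.coe_insert, Finset.coe_singleton, Set.mem_insert_iff,
            Set.mem_singleton_iff] at ha hb
          rcases ha with rfl | rfl <;> rcases hb with rfl | rfl
          · exact absurd rfl hne
          · exact hadj
          · exact hadj.symm
          · exact absurd rfl hne
        · intro a ha b hb hne
          simp only [Finset.mem_singleton] at ha hb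
          exact absurd (ha.trans hb.symm) hne
        · have hc : ({u, v} : Finset (Fin n)).card = 2 := by
            rw [Finset.card_insert_of_notMem (by simpa using huv), Finset.card_singleton]
          rw [hc, Finset.card_singleton]
          push_cast
          linarith
      · refine ⟨{u}, {u, v}, by simpa using hu, ?_, ?_, ?_, ?_⟩
        · intro a ha
          simp only [Finset.mem_insert, Finset.mem_singleton] at ha
          rcases ha with rfl | rfl
          · exact hu
          · exact hv
        · simp [SimpleGraph.IsClique, Set.Pairwise]
        · intro a ha b hb hne
          simp only [Finset.mem_insert, Finset.mem_singleton] at ha hb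
          rcases ha with rfl | rfl <;> rcases hb with rfl | rfl
          · exact absurd rfl hne
          · exact hadj
          · exact fun h => hadj h.symm
          · exact absurd rfl hne
        · have hc : ({u, v} : Finset (Fin n)).card = 2 := by
            rw [Finset.card_insert_of_notMem (by simpa using huv), Finset.card_singleton]
          rw [hc, Finset.card_singleton]
          push_cast
          linarith
  intro M
  induction M with
  | zero =>
    intro W hW
    have h0 : W.card = 0 := by omega
    have : (W.card:ℝ) ≤ N0 d n := by rw [h0]; push_cast; linarith
    exact hsmall_out W this
  | succ M ih =>
    intro W hWM
    by_cases hbig : N0 d n ≤ (W.card:ℝ)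
    swap
    · exact hsmall_out W (le_of_not_ge (fun h => hbig h))
    -- main case
    obtain ⟨A, B, hAW, hBW, hdisj, hAc, hBc, hside⟩ := pair_lemma G hvc W hbig
    have h2bW : (2:ℝ) ≤ bet d n * W.card := by
      nlinarith [mul_le_mul_of_nonneg_left hbig hbpos.le]
    have hA2 : (2:ℝ) ≤ (A.card:ℝ) := le_trans h2bW hAc
    have hB2 : (2:ℝ) ≤ (B.card:ℝ) := le_trans h2bW hBc
    have hA2n : 2 ≤ A.card := by exact_mod_cast hA2
    have hB2n : 2 ≤ B.card := by exact_mod_cast hB2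
    have hABcard : A.card + B.card ≤ W.card := by
      rw [← Finset.card_union_of_disjoint hdisj]
      exact Finset.card_le_card (Finset.union_subset hAW hBW)
    have hAM : A.card ≤ M := by omega
    have hBM : B.card ≤ M := by omega
    obtain ⟨ScA, SiA, hScAs, hSiAs, hScAcl, hSiAind, hprodA⟩ := ih A hAM
    have hWpos : (0:ℝ) < (W.card:ℝ) := by linarith [hN02]
    have hXpos : (0:ℝ) < min ((tt d n)^2) ((A.card:ℝ) ^ (del d n)) := by
      apply lt_min (by positivity)
      apply Real.rpow_pos_of_pos (by linarith)
    have hprodApos : (0:ℝ) < (ScA.card:ℝ) * (SiA.card:ℝ) := lt_of_lt_of_le hXpos hprodA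
    have hScA1 : (1:ℝ) ≤ (ScA.card:ℝ) := by
      have : ScA.card ≠ 0 := by
        intro h; rw [h] at hprodApos; simp at hprodApos
      have : 1 ≤ ScA.card := Nat.one_le_iff_ne_zero.mpr this
      exact_mod_cast this
    have hSiA1 : (1:ℝ) ≤ (SiA.card:ℝ) := by
      have : SiA.card ≠ 0 := by
        intro h; rw [h] at hprodApos; simp at hprodApos
      have : 1 ≤ SiA.card := Nat.one_le_iff_ne_zero.mpr this
      exact_mod_cast this
    -- X value and min helper
    set X := min ((tt d n)^2) ((bet d n * W.card / 2) ^ (del d n)) with hX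
    have hXA : X ≤ (ScA.card:ℝ) * (SiA.card:ℝ) := by
      refine le_trans ?_ hprodA
      apply min_le_min (le_refl _)
      apply Real.rpow_le_rpow (by positivity) (by linarith) hdel.le
    have hfinmin : (2:ℝ) * X ≥ min ((tt d n)^2) ((W.card:ℝ) ^ (del d n)) := by
      rcases min_cases ((tt d n)^2) ((bet d n * W.card / 2) ^ (del d n)) with ⟨hXe, hc⟩ | ⟨hXe, hc⟩
      · rw [hX, hXe]
        have : min ((tt d n)^2) ((W.card:ℝ) ^ (del d n)) ≤ (tt d n)^2 := min_le_left _ _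
        nlinarith [sq_nonneg (tt d n)]
      · rw [hX, hXe]
        have heq : (2:ℝ) * ((bet d n * W.card / 2) ^ (del d n)) = (W.card:ℝ) ^ (del d n) := by
          have h1 : bet d n * (W.card:ℝ) / 2 = (bet d n / 2) * (W.card:ℝ) := by ring
          rw [h1, Real.mul_rpow (by positivity) (Nat.cast_nonneg _), half_rpow_del]
          ring
        rw [heq]
        exact min_le_right _ _
    rcases hside with hsp | hdn
    · -- sparse side: independent sets accumulate
      by_cases hcap : (SiA.card:ℝ) ≤ 2*(tt d n)^2
      · set B' := B.filter (fun v => ∀ u ∈ SiA, ¬ G.Adj u v) with hB'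
        have hB'B : B' ⊆ B := Finset.filter_subset _ _
        have hB'card : bet d n * W.card / 2 ≤ (B'.card:ℝ) := by
          have hsubB : B.filter (fun v => ¬ (∀ u ∈ SiA, ¬ G.Adj u v)) ⊆
              SiA.biUnion (fun u => B.filter (fun y => G.Adj u y)) := by
            intro v hv
            rw [Finset.mem_filter] at hv
            obtain ⟨hvB, hex⟩ := hv
            push_neg at hex
            obtain ⟨u, hu, hadj⟩ := hex
            rw [Finset.mem_biUnion]
            exact ⟨u, hu, Finset.mem_filter.mpr ⟨hvB, hadj⟩⟩
          have hcb : ((B.filter (fun v => ¬ (∀ u ∈ SiA, ¬ G.Adj u v))).card : ℝ) ≤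
              (SiA.card:ℝ) * (th d n * B.card) := by
            have h1 : (B.filter (fun v => ¬ (∀ u ∈ SiA, ¬ G.Adj u v))).card ≤
                ∑ u ∈ SiA, (B.filter (fun y => G.Adj u y)).card :=
              le_trans (Finset.card_le_card hsubB) (Finset.card_biUnion_le)
            have h2 : ((∑ u ∈ SiA, (B.filter (fun y => G.Adj u y)).card : ℕ) : ℝ) ≤
                (SiA.card:ℝ) * (th d n * B.card) := by
              push_cast
              refine le_trans (Finset.sum_le_sum (fun u hu => (hsp u (hSiAs hu)).le)) ?_
              rw [Finset.sum_const, nsmul_eq_mul]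
            exact le_trans (by exact_mod_cast h1) h2
          have hsplit : (B'.card : ℕ) + (B.filter (fun v => ¬ (∀ u ∈ SiA, ¬ G.Adj u v))).card
              = B.card := by
            rw [hB']
            exact Finset.card_filter_add_card_filter_not _
          have hsplitR : (B'.card:ℝ) = (B.card:ℝ) -
              ((B.filter (fun v => ¬ (∀ u ∈ SiA, ¬ G.Adj u v))).card : ℝ) := by
            have := hsplit
            push_cast [← this]
            ring
          rw [hsplitR]
          have hstep : (SiA.card:ℝ) * (th d n * B.card) ≤ (B.card:ℝ)/2 := by
            have httsq : (0:ℝ) < (tt d n)^2 := by positivity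
            have hBnn : (0:ℝ) ≤ (B.card:ℝ) := by positivity
            have hthv := th_mul d n
            nlinarith [mul_le_mul_of_nonneg_right hcap (mul_nonneg hthpos.le hBnn)]
          calc bet d n * (W.card:ℝ) / 2 ≤ (B.card:ℝ)/2 := by linarith
          _ ≤ (B.card:ℝ) - (SiA.card:ℝ) * (th d n * B.card) := by linarith
          _ ≤ _ := by linarith
        have hB'M : B'.card ≤ M := le_trans (Finset.card_le_card hB'B) hBM
        obtain ⟨ScB, SiB, hScBs, hSiBs, hScBcl, hSiBind, hprodB⟩ := ih B' hB'M
        have hXB : X ≤ (ScB.card:ℝ) * (SiB.card:ℝ) := by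
          refine le_trans ?_ hprodB
          apply min_le_min (le_refl _)
          apply Real.rpow_le_rpow (by positivity) hB'card hdel.le
        -- combine
        refine ⟨if ScA.card ≤ ScB.card then ScB else ScA, SiA ∪ SiB, ?_, ?_, ?_, ?_, ?_⟩
        · by_cases h : ScA.card ≤ ScB.card <;> simp only [h, if_true, if_false, reduceIte]
          · exact hScBs.trans (hB'B.trans hBW)
          · exact hScAs.trans hAW
        · exact Finset.union_subset (hSiAs.trans hAW) (hSiBs.trans (hB'B.trans hBW))
        · by_cases h : ScA.card ≤ ScB.card <;> simp only [h, if_true, if_false, reduceIte]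
          · exact hScBcl
          · exact hScAcl
        · intro a ha b hb hne
          rw [Finset.mem_union] at ha hb
          rcases ha with ha | ha <;> rcases hb with hb | hb
          · exact hSiAind a ha b hb hne
          · have := (Finset.mem_filter.mp (hSiBs hb)).2
            exact this a ha
          · have := (Finset.mem_filter.mp (hSiBs ha)).2
            exact fun hadj => (this b hb) hadj.symm
          · exact hSiBind a ha b hb hne
        · have hSiD : Disjoint SiA SiB :=
            Finset.disjoint_of_subset_left hSiAs
              (Finset.disjoint_of_subset_right (hSiBs.trans hB'B) hdisj)
          rw [Finset.card_union_of_disjoint hSiD]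
          push_cast
          set sc : ℝ := if ScA.card ≤ ScB.card then ((ScB.card:ℕ):ℝ) else ((ScA.card:ℕ):ℝ) with hsc
          have hscA : (ScA.card:ℝ) ≤ sc := by
            rw [hsc]; by_cases h : ScA.card ≤ ScB.card <;>
              simp only [h, if_true, if_false, reduceIte]
            · exact_mod_cast h
            · exact le_refl _
          have hscB : (ScB.card:ℝ) ≤ sc := by
            rw [hsc]; by_cases h : ScA.card ≤ ScB.card <;>
              simp only [h, if_true, if_false, reduceIte]
            · exact le_refl _
            · push_neg at h; exact_mod_cast h.le
          have hcast : ((if ScA.card ≤ ScB.card then ScB else ScA).card : ℝ) = sc := by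
            rw [hsc]; by_cases h : ScA.card ≤ ScB.card <;>
              simp only [h, if_true, if_false, reduceIte]
          rw [hcast]
          have hSiBnn : (0:ℝ) ≤ (SiB.card:ℝ) := by positivity
          have hSiAnn : (0:ℝ) ≤ (SiA.card:ℝ) := by positivity
          have key : (ScA.card:ℝ) * (SiA.card:ℝ) + (ScB.card:ℝ) * (SiB.card:ℝ) ≤
              sc * ((SiA.card:ℝ) + (SiB.card:ℝ)) := by
            have e1 : (ScA.card:ℝ) * (SiA.card:ℝ) ≤ sc * (SiA.card:ℝ) :=
              mul_le_mul_of_nonneg_right hscA hSiAnn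
            have e2 : (ScB.card:ℝ) * (SiB.card:ℝ) ≤ sc * (SiB.card:ℝ) :=
              mul_le_mul_of_nonneg_right hscB hSiBnn
            nlinarith
          calc min ((tt d n)^2) ((W.card:ℝ) ^ (del d n)) ≤ 2 * X := hfinmin
          _ ≤ (ScA.card:ℝ) * (SiA.card:ℝ) + (ScB.card:ℝ) * (SiB.card:ℝ) := by
              have := hXA; have := hXB; linarith
          _ ≤ _ := key
      · -- harvest : SiA alone is big enough
        push_neg at hcap
        refine ⟨ScA, SiA, hScAs.trans hAW, hSiAs.trans hAW, hScAcl, hSiAind, ?_⟩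
        have : (tt d n)^2 ≤ (ScA.card:ℝ) * (SiA.card:ℝ) := by nlinarith
        exact le_trans (min_le_left _ _) this
    · -- dense side: cliques accumulate
      by_cases hcap : (ScA.card:ℝ) ≤ 2*(tt d n)^2
      · set B' := B.filter (fun v => ∀ u ∈ ScA, G.Adj u v) with hB'
        have hB'B : B' ⊆ B := Finset.filter_subset _ _
        have hB'card : bet d n * W.card / 2 ≤ (B'.card:ℝ) := by
          have hsubB : B.filter (fun v => ¬ (∀ u ∈ ScA, G.Adj u v)) ⊆
              ScA.biUnion (fun u => B.filter (fun y => ¬ G.Adj u y)) := by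
            intro v hv
            rw [Finset.mem_filter] at hv
            obtain ⟨hvB, hex⟩ := hv
            push_neg at hex
            obtain ⟨u, hu, hadj⟩ := hex
            rw [Finset.mem_biUnion]
            exact ⟨u, hu, Finset.mem_filter.mpr ⟨hvB, hadj⟩⟩
          have hcb : ((B.filter (fun v => ¬ (∀ u ∈ ScA, G.Adj u v))).card : ℝ) ≤
              (ScA.card:ℝ) * (th d n * B.card) := by
            have h1 : (B.filter (fun v => ¬ (∀ u ∈ ScA, G.Adj u v))).card ≤
                ∑ u ∈ ScA, (B.filter (fun y => ¬ G.Adj u y)).card :=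
              le_trans (Finset.card_le_card hsubB) (Finset.card_biUnion_le)
            have h2 : ((∑ u ∈ ScA, (B.filter (fun y => ¬ G.Adj u y)).card : ℕ) : ℝ) ≤
                (ScA.card:ℝ) * (th d n * B.card) := by
              push_cast
              refine le_trans (Finset.sum_le_sum (fun u hu => (hdn u (hScAs hu)).le)) ?_
              rw [Finset.sum_const, nsmul_eq_mul]
            exact le_trans (by exact_mod_cast h1) h2
          have hsplit : (B'.card : ℕ) + (B.filter (fun v => ¬ (∀ u ∈ ScA, G.Adj u v))).card
              = B.card := by
            rw [hB']
            exact Finset.card_filter_add_card_filter_not _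
          have hsplitR : (B'.card:ℝ) = (B.card:ℝ) -
              ((B.filter (fun v => ¬ (∀ u ∈ ScA, G.Adj u v))).card : ℝ) := by
            have := hsplit
            push_cast [← this]
            ring
          rw [hsplitR]
          have hstep : (ScA.card:ℝ) * (th d n * B.card) ≤ (B.card:ℝ)/2 := by
            have httsq : (0:ℝ) < (tt d n)^2 := by positivity
            have hBnn : (0:ℝ) ≤ (B.card:ℝ) := by positivity
            have hthv := th_mul d n
            nlinarith [mul_le_mul_of_nonneg_right hcap (mul_nonneg hthpos.le hBnn)]
          calc bet d n * (W.card:ℝ) / 2 ≤ (B.card:ℝ)/2 := by linarith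
          _ ≤ (B.card:ℝ) - (ScA.card:ℝ) * (th d n * B.card) := by linarith
          _ ≤ _ := by linarith
        have hB'M : B'.card ≤ M := le_trans (Finset.card_le_card hB'B) hBM
        obtain ⟨ScB, SiB, hScBs, hSiBs, hScBcl, hSiBind, hprodB⟩ := ih B' hB'M
        have hXB : X ≤ (ScB.card:ℝ) * (SiB.card:ℝ) := by
          refine le_trans ?_ hprodB
          apply min_le_min (le_refl _)
          apply Real.rpow_le_rpow (by positivity) hB'card hdel.le
        refine ⟨ScA ∪ ScB, if SiA.card ≤ SiB.card then SiB else SiA, ?_, ?_, ?_, ?_, ?_⟩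
        · exact Finset.union_subset (hScAs.trans hAW) (hScBs.trans (hB'B.trans hBW))
        · by_cases h : SiA.card ≤ SiB.card <;> simp only [h, if_true, if_false, reduceIte]
          · exact hSiBs.trans (hB'B.trans hBW)
          · exact hSiAs.trans hAW
        · intro a ha b hb hne
          rw [Finset.coe_union, Set.mem_union] at ha hb
          rcases ha with ha | ha <;> rcases hb with hb | hb
          · exact hScAcl ha hb hne
          · have := (Finset.mem_filter.mp (hScBs hb)).2
            exact this a ha
          · have := (Finset.mem_filter.mp (hScBs ha)).2
            exact ((this b hb)).symm
          · exact hScBcl ha hb hne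
        · by_cases h : SiA.card ≤ SiB.card <;> simp only [h, if_true, if_false, reduceIte]
          · exact hSiBind
          · exact hSiAind
        · have hScD : Disjoint ScA ScB :=
            Finset.disjoint_of_subset_left hScAs
              (Finset.disjoint_of_subset_right (hScBs.trans hB'B) hdisj)
          rw [Finset.card_union_of_disjoint hScD]
          push_cast
          set si : ℝ := if SiA.card ≤ SiB.card then ((SiB.card:ℕ):ℝ) else ((SiA.card:ℕ):ℝ) with hsi
          have hsiA : (SiA.card:ℝ) ≤ si := by
            rw [hsi]; by_cases h : SiA.card ≤ SiB.card <;>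
              simp only [h, if_true, if_false, reduceIte]
            · exact_mod_cast h
            · exact le_refl _
          have hsiB : (SiB.card:ℝ) ≤ si := by
            rw [hsi]; by_cases h : SiA.card ≤ SiB.card <;>
              simp only [h, if_true, if_false, reduceIte]
            · exact le_refl _
            · push_neg at h; exact_mod_cast h.le
          have hcast : ((if SiA.card ≤ SiB.card then SiB else SiA).card : ℝ) = si := by
            rw [hsi]; by_cases h : SiA.card ≤ SiB.card <;>
              simp only [h, if_true, if_false, reduceIte]
          rw [hcast]
          have hScBnn : (0:ℝ) ≤ (ScB.card:ℝ) := by positivity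
          have hScAnn : (0:ℝ) ≤ (ScA.card:ℝ) := by positivity
          have key : (ScA.card:ℝ) * (SiA.card:ℝ) + (ScB.card:ℝ) * (SiB.card:ℝ) ≤
              ((ScA.card:ℝ) + (ScB.card:ℝ)) * si := by
            have e1 : (ScA.card:ℝ) * (SiA.card:ℝ) ≤ (ScA.card:ℝ) * si :=
              mul_le_mul_of_nonneg_left hsiA hScAnn
            have e2 : (ScB.card:ℝ) * (SiB.card:ℝ) ≤ (ScB.card:ℝ) * si :=
              mul_le_mul_of_nonneg_left hsiB hScBnn
            nlinarith
          calc min ((tt d n)^2) ((W.card:ℝ) ^ (del d n)) ≤ 2 * X := hfinmin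
          _ ≤ (ScA.card:ℝ) * (SiA.card:ℝ) + (ScB.card:ℝ) * (SiB.card:ℝ) := by
              have := hXA; have := hXB; linarith
          _ ≤ _ := key
      · push_neg at hcap
        refine ⟨ScA, SiA, hScAs.trans hAW, hSiAs.trans hAW, hScAcl, hSiAind, ?_⟩
        have : (tt d n)^2 ≤ (ScA.card:ℝ) * (SiA.card:ℝ) := by nlinarith
        exact le_trans (min_le_left _ _) this

set_option maxHeartbeats 1600000 in
lemma key_calc (d n : ℕ) (hn : 1 ≤ n)
    (hcase : Real.log 2 < eps d * Real.sqrt (Real.log n)) :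
    (tt d n)^2 ≤ ((n:ℝ)) ^ (del d n) := by
  set s := Real.sqrt (Real.log n) with hs
  set ε := eps d with he
  have hnR : (1:ℝ) ≤ (n:ℝ) := by exact_mod_cast hn
  have hL0 : (0:ℝ) ≤ Real.log n := Real.log_nonneg hnR
  have hss : s * s = Real.log n := Real.mul_self_sqrt hL0
  have hεpos : 0 < ε := eps_pos d
  have hl2 : (0:ℝ) < Real.log 2 := Real.log_pos (by norm_num)
  have hs0 : (0:ℝ) ≤ s := Real.sqrt_nonneg _
  have hspos : (0:ℝ) < s := by
    rcases lt_or_ge 0 s with h | h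
    · exact h
    · exfalso
      have hzero : s = 0 := le_antisymm h hs0
      rw [hzero, mul_zero] at hcase
      linarith
  have hkR : (3:ℝ) ≤ ((kk d):ℝ) := by exact_mod_cast kk_ge d
  have httpos := tt_pos d n
  have hlogt : Real.log (tt d n) = ε * s := by
    unfold tt; rw [Real.log_exp, ← he, ← hs]
  have hN0eq : N0 d n = 8*((kk d):ℝ)^2 * (4*(tt d n)^2)^(kk d) := by
    unfold N0 bet th
    have h2 : ((1:ℝ)/(4*(tt d n)^2))^(kk d) = 1/(4*(tt d n)^2)^(kk d) := by
      rw [div_pow, one_pow]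
    rw [h2, div_div_eq_mul_div]
    have h3 : (0:ℝ) < (4*(tt d n)^2)^(kk d) := by positivity
    have h4 : (0:ℝ) < ((kk d):ℝ) := by linarith
    field_simp
    ring
  have hlogN0 : Real.log (N0 d n) = Ck d + 2*((kk d):ℝ)*(ε*s) := by
    rw [hN0eq, Real.log_mul (by positivity) (by positivity), Real.log_pow]
    unfold Ck
    have h5 : Real.log (4*(tt d n)^2) = Real.log 4 + 2*(ε*s) := by
      rw [Real.log_mul (by norm_num) (by positivity), Real.log_pow, hlogt]
      push_cast
      ring
    rw [h5]
    push_cast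
    ring
  have hn0 : (0:ℝ) < (n:ℝ) := by linarith
  rw [Real.rpow_def_of_pos hn0]
  have ht2 : (tt d n)^2 = Real.exp (2*(ε*s)) := by
    unfold tt
    rw [sq, ← Real.exp_add, ← he, ← hs]
    ring_nf
  rw [ht2]
  apply Real.exp_le_exp.mpr
  -- goal : 2*(ε*s) ≤ log n * del
  have hδ : del d n = Real.log 2 / Real.log (N0 d n) := rfl
  rw [hδ, hlogN0, ← hss]
  have hDpos : (0:ℝ) < Ck d + 2*((kk d):ℝ)*(ε*s) := by
    have := Ck_pos d
    have : (0:ℝ) ≤ 2*((kk d):ℝ)*(ε*s) := by positivity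
    nlinarith [Ck_pos d]
  rw [mul_div_assoc', le_div_iff₀ hDpos]
  -- goal : 2*(ε*s) * (Ck d + 2*k*(ε*s)) ≤ s*s*log 2
  have h8k : 8*((kk d):ℝ)*ε^2 ≤ Real.log 2 := by
    have h := eps_sq_le d
    rw [le_div_iff₀ (by positivity)] at h
    rw [← he] at h
    linarith
  have hCk2 : 4*ε^2*(Ck d) ≤ (Real.log 2)^2 := by
    have h := eps_le_Ck d
    rw [← he] at h
    linarith
  have hp1 : 4*((kk d):ℝ)*ε^2*(s*s) ≤ (Real.log 2/2)*(s*s) := by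
    have h9 := mul_le_mul_of_nonneg_right h8k (mul_nonneg hs0 hs0)
    linarith
  have hp2 : 2*ε*s*(Ck d) ≤ (Real.log 2/2)*(s*s) := by
    have hA : Real.log 2 * Real.log 2 < (ε*s)*Real.log 2 := mul_lt_mul_of_pos_right hcase hl2
    have hB : 4*ε^2*(Ck d) ≤ (ε*s)*Real.log 2 := by
      rw [sq] at hCk2
      linarith
    have hC : (4*ε^2*(Ck d))*s ≤ ((ε*s)*Real.log 2)*s := mul_le_mul_of_nonneg_right hB hs0
    have hgoal : (2*ε)*(2*ε*s*(Ck d)) ≤ (2*ε)*((Real.log 2/2)*(s*s)) := by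
      linarith [hC]
    exact (mul_le_mul_iff_right₀ (by positivity)).mp hgoal
  nlinarith [hp1, hp2]

end EHVC

set_option maxHeartbeats 1000000 in
lemma EHVC.final_result (d : ℕ) :
    ∃ ε : ℝ, 0 < ε ∧
      ∀ (n : ℕ), 1 ≤ n → ∀ G : SimpleGraph (Fin n),
        VCDimSetLE (Set.range G.neighborSet) d →
        ∃ S : Finset (Fin n),
          (G.IsClique ↑S ∨ ∀ u ∈ S, ∀ v ∈ S, u ≠ v → ¬ G.Adj u v) ∧
          Real.exp (ε * Real.sqrt (Real.log n)) ≤ (S.card : ℝ) := by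
  classical
  refine ⟨EHVC.eps d, EHVC.eps_pos d, ?_⟩
  intro n hn G hvc
  by_cases hcase : EHVC.eps d * Real.sqrt (Real.log n) ≤ Real.log 2
  · have hexp2 : Real.exp (EHVC.eps d * Real.sqrt (Real.log n)) ≤ 2 := by
      calc Real.exp (EHVC.eps d * Real.sqrt (Real.log n)) ≤ Real.exp (Real.log 2) :=
            Real.exp_le_exp.mpr hcase
      _ = 2 := Real.exp_log (by norm_num)
    rcases Nat.lt_or_ge n 2 with h2 | h2
    · have hn1 : n = 1 := by omega
      subst hn1
      refine ⟨{0}, Or.inl ?_, ?_⟩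
      · intro a ha b hb hne
        simp only [Finset.coe_singleton, Set.mem_singleton_iff] at ha hb
        exact absurd (ha.trans hb.symm) hne
      · simp
    · have h0n : 0 < n := by omega
      have h1n : 1 < n := by omega
      set u : Fin n := ⟨0, h0n⟩ with hu
      set v : Fin n := ⟨1, h1n⟩ with hv
      have huv : u ≠ v := by
        intro h
        rw [Fin.ext_iff, hu, hv] at h
        simp at h
      have hcard : ({u,v} : Finset (Fin n)).card = 2 := by
        rw [Finset.card_insert_of_notMem (by simpa using huv), Finset.card_singleton]
      by_cases hadj : G.Adj u v
      · refine ⟨{u,v}, Or.inl ?_, ?_⟩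
        · intro a ha b hb hne
          simp only [Finset.coe_insert, Finset.coe_singleton, Set.mem_insert_iff,
            Set.mem_singleton_iff] at ha hb
          rcases ha with rfl | rfl <;> rcases hb with rfl | rfl
          · exact absurd rfl hne
          · exact hadj
          · exact hadj.symm
          · exact absurd rfl hne
        · rw [hcard]
          push_cast
          linarith
      · refine ⟨{u,v}, Or.inr ?_, ?_⟩
        · intro a ha b hb hne
          simp only [Finset.mem_insert, Finset.mem_singleton] at ha hb
          rcases ha with rfl | rfl <;> rcases hb with rfl | rfl
          · exact absurd rfl hne
          · exact hadj
          · exact fun h => hadj h.symm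
          · exact absurd rfl hne
        · rw [hcard]
          push_cast
          linarith
  · push_neg at hcase
    obtain ⟨Sc, Si, hScs, hSis, hcl, hind, hprod⟩ :=
      EHVC.main_rec G hvc n Finset.univ (by simp)
    have hcardW : (((Finset.univ : Finset (Fin n)).card : ℕ) : ℝ) = (n:ℝ) := by
      rw [Finset.card_univ, Fintype.card_fin]
    rw [hcardW] at hprod
    have hkey := EHVC.key_calc d n hn hcase
    rw [min_eq_left hkey] at hprod
    have httpos := EHVC.tt_pos d n
    by_cases hSc : EHVC.tt d n ≤ (Sc.card:ℝ)
    · exact ⟨Sc, Or.inl hcl, hSc⟩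
    · push_neg at hSc
      have hSi : EHVC.tt d n ≤ (Si.card:ℝ) := by
        by_contra hlt
        push_neg at hlt
        have h1 : (0:ℝ) ≤ (Sc.card:ℝ) := by positivity
        have h2 : (0:ℝ) ≤ (Si.card:ℝ) := by positivity
        nlinarith
      exact ⟨Si, Or.inr hind, hSi⟩

/-- Erdős–Hajnal for graphs of bounded VC-dimension (weak form): there is `ε = ε(d) > 0`
such that every graph on `n ≥ 1` vertices whose neighborhood set system has VC-dimension
at most `d` contains a clique or an independent set of size at least `e^{ε√(log n)}`. -/
theorem erdos_hajnal_weak_bounded_vc (d : ℕ) :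
    ∃ ε : ℝ, 0 < ε ∧
      ∀ (n : ℕ), 1 ≤ n → ∀ G : SimpleGraph (Fin n),
        VCDimSetLE (Set.range G.neighborSet) d →
        ∃ S : Finset (Fin n),
          (G.IsClique ↑S ∨ ∀ u ∈ S, ∀ v ∈ S, u ≠ v → ¬ G.Adj u v) ∧
          Real.exp (ε * Real.sqrt (Real.log n)) ≤ (S.card : ℝ) := by
  exact EHVC.final_result d
end
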